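/- arXiv:2202.10074 — 4 statements merged into one kernel-verified Lean document; each statement's English description precedes it below -/
import Mathlib

section
/- There is an absolute constant C > 0 with the following property. Let K ⊂ ℝ³ be a convex body and E an ellipsoid with E ⊂ K ⊂ 3^{3/2}E, whose principal radii are r₁ ≤ r₂ ≤ r₃ in the orthonormal directions e₁, e₂, e₃. Let I = [m, M] be the orthogonal projection of K onto the e₃-axis (identified with an interval in ℝ). Let ε ∈ (0, 1/2), let x ∈ ∂K satisfy min(x·e₃ − m, M − x·e₃) ≥ ε r₃, and let ν be an outer unit normal of K at x. Then |ν·e₃| ≤ C r₂ / (ε r₃). In particular, as r₂/r₃ → 0 the outer normals at such points converge to the equator {u ∈ S² : u·e₃ = 0}. -/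
open MeasureTheory Metric Set Filter
open scoped RealInnerProductSpace ENNReal NNReal Real

noncomputable section

abbrev E3 := EuclideanSpace ℝ (Fin 3)

def unitSphere : Set E3 := Metric.sphere 0 1

def IsConvexBody (K : Set E3) : Prop :=
  Convex ℝ K ∧ IsCompact K ∧ (interior K).Nonempty

def suppFn (K : Set E3) (x : E3) : ℝ := sSup ((fun y => ⟪x, y⟫) '' K)

def outerNormalAt (K : Set E3) (x ν : E3) : Prop :=
  ‖ν‖ = 1 ∧ ∀ z ∈ K, ⟪ν, z - x⟫ ≤ (0:ℝ)

def gaussPre (K : Set E3) (ω : Set E3) : Set E3 :=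
  {x ∈ frontier K | ∃ ν ∈ ω, outerNormalAt K x ν}

def coneOver (G : Set E3) : Set E3 := {y | ∃ x ∈ G, ∃ t ∈ Set.Icc (0:ℝ) 1, y = t • x}

def SolvesLMP (K : Set E3) (f : E3 → ℝ) : Prop :=
  ∀ ω : Set E3, ω ⊆ unitSphere → MeasurableSet ω →
    3 * (volume (coneOver (gaussPre K ω))).toReal = ∫ u in ω, f u ∂(μH[2])

def sphSupNorm (f : E3 → ℝ) : ℝ := sSup {c | ∃ x ∈ unitSphere, c = |f x|}

def sphHolderSemi (α : ℝ) (f : E3 → ℝ) : ℝ :=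
  sSup {c | ∃ x ∈ unitSphere, ∃ y ∈ unitSphere, x ≠ y ∧ c = |f x - f y| / ‖x - y‖ ^ α}

def sphHolderNorm (α : ℝ) (f : E3 → ℝ) : ℝ := sphSupNorm f + sphHolderSemi α f

def IsEllipsoid (E : Set E3) (c : E3) (e : Fin 3 → E3) (r : Fin 3 → ℝ) : Prop :=
  (∀ i, 0 < r i) ∧ Orthonormal ℝ e ∧
  E = {x : E3 | (∑ i, (⟪x - c, e i⟫ / r i) ^ 2) ≤ 1}

def dilate (c : E3) (s : ℝ) (A : Set E3) : Set E3 := (fun x => c + s • (x - c)) '' A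

def centerOfMass (K : Set E3) : E3 := ((volume K).toReal)⁻¹ • ∫ x in K, x

/-- `E ⊆ K ⊆ 3^{3/2} E`, the dilation taken about the center `c` of `E`. -/
def IsJohnEllipsoid (K E : Set E3) (c : E3) : Prop :=
  E ⊆ K ∧ K ⊆ dilate c ((3:ℝ) ^ ((3:ℝ) / 2)) E

lemma rpow_le_six' : (3:ℝ) ^ ((3:ℝ)/2) ≤ 6 := by
  have hsq : ((3:ℝ) ^ ((3:ℝ)/2)) ^ 2 = 27 := by
    rw [← Real.rpow_natCast ((3:ℝ) ^ ((3:ℝ)/2)) 2, ← Real.rpow_mul (by norm_num)]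
    norm_num
  nlinarith [Real.rpow_nonneg (by norm_num : (0:ℝ) ≤ 3) ((3:ℝ)/2)]


theorem stmt6 :
    ∃ C > 0, ∀ (K E : Set E3) (c : E3) (e : Fin 3 → E3) (r : Fin 3 → ℝ),
      IsConvexBody K → IsEllipsoid E c e r → r 0 ≤ r 1 → r 1 ≤ r 2 →
      E ⊆ K → K ⊆ dilate c ((3:ℝ) ^ ((3:ℝ) / 2)) E →
      ∀ ε ∈ Set.Ioo (0:ℝ) (1/2), ∀ x ∈ frontier K, ∀ ν : E3,
        min (⟪x, e 2⟫ - sInf ((fun y => ⟪y, e 2⟫) '' K))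
            (sSup ((fun y => ⟪y, e 2⟫) '' K) - ⟪x, e 2⟫) ≥ ε * r 2 →
        outerNormalAt K x ν →
        |⟪ν, e 2⟫| ≤ C * r 1 / (ε * r 2) := by
  refine ⟨48, by norm_num, ?_⟩
  intro K E c e r hK hE hr01 hr12 hEK hKE ε hε x hx ν hmin hν
  obtain ⟨hKconv, hKcomp, hKint⟩ := hK
  obtain ⟨hrpos, he, hEdef⟩ := hE
  set s : ℝ := (3:ℝ) ^ ((3:ℝ)/2) with hs
  have hs6 : s ≤ 6 := rpow_le_six'
  have hs0 : 0 ≤ s := Real.rpow_nonneg (by norm_num) _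
  have hKne : K.Nonempty := hKint.mono interior_subset
  have hxK : x ∈ K := by
    have := frontier_subset_closure (s := K) hx
    rwa [hKcomp.isClosed.closure_eq] at this
  -- componentwise bound for points of K
  have hcomp : ∀ w ∈ K, ∀ i, |⟪w - c, e i⟫| ≤ s * r i := by
    intro w hw i
    obtain ⟨w₀, hw₀, hweq⟩ := hKE hw
    rw [hEdef] at hw₀
    have hterm : (⟪w₀ - c, e i⟫ / r i) ^ 2 ≤ 1 :=
      le_trans (Finset.single_le_sum (f := fun j => (⟪w₀ - c, e j⟫ / r j) ^ 2)
        (fun j _ => sq_nonneg _) (Finset.mem_univ i)) hw₀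
    have habs : |⟪w₀ - c, e i⟫ / r i| ≤ 1 := (sq_le_one_iff_abs_le_one _).1 hterm
    have h1 : |⟪w₀ - c, e i⟫| ≤ r i := by
      rw [abs_div, abs_of_pos (hrpos i), div_le_one (hrpos i)] at habs
      exact habs
    have hwc : w - c = s • (w₀ - c) := by
      simp only at hweq
      rw [← hweq]; exact add_sub_cancel_left _ _
    rw [hwc, real_inner_smul_left, abs_mul, abs_of_nonneg hs0]
    exact mul_le_mul_of_nonneg_left h1 hs0
  have hdiff : ∀ z ∈ K, ∀ w ∈ K, ∀ i, |⟪z - w, e i⟫| ≤ 2 * s * r i := by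
    intro z hz w hw i
    have hzw : z - w = (z - c) - (w - c) := by abel
    rw [hzw, inner_sub_left]
    calc |⟪z - c, e i⟫ - ⟪w - c, e i⟫| ≤ |⟪z - c, e i⟫| + |⟪w - c, e i⟫| := abs_sub _ _
      _ ≤ s * r i + s * r i := add_le_add (hcomp z hz i) (hcomp w hw i)
      _ = 2 * s * r i := by ring
  -- Parseval
  let b : Module.Basis (Fin 3) ℝ E3 :=
    basisOfOrthonormalOfCardEqFinrank he (by simp [finrank_euclideanSpace])
  have hbcoe : ⇑b = e := coe_basisOfOrthonormalOfCardEqFinrank he _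
  let ob : OrthonormalBasis (Fin 3) ℝ E3 := b.toOrthonormalBasis (by rwa [hbcoe])
  have hobcoe : ⇑ob = e := by rw [Module.Basis.coe_toOrthonormalBasis, hbcoe]
  have parseval : ∀ v w : E3, ⟪v, w⟫ = ∑ i, ⟪v, e i⟫ * ⟪e i, w⟫ := by
    intro v w
    rw [← ob.sum_inner_mul_inner v w, hobcoe]
  have hνi : ∀ i, |⟪ν, e i⟫| ≤ 1 := by
    intro i
    calc |⟪ν, e i⟫| ≤ ‖ν‖ * ‖e i‖ := abs_real_inner_le_norm _ _
      _ = 1 := by rw [hν.1, he.1 i, one_mul]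
  have hε0 : 0 < ε := hε.1
  have hεr : 0 < ε * r 2 := mul_pos hε0 (hrpos 2)
  have key : ∀ z ∈ K, ⟪ν, e 2⟫ * ⟪z - x, e 2⟫ ≤ 24 * r 1 := by
    intro z hz
    have h0 := hν.2 z hz
    rw [parseval] at h0
    rw [Fin.sum_univ_three] at h0
    have bd : ∀ i, |⟪ν, e i⟫ * ⟪e i, z - x⟫| ≤ 2 * s * r i := by
      intro i
      rw [abs_mul, real_inner_comm (z - x) (e i)]
      calc |⟪ν, e i⟫| * |⟪z - x, e i⟫| ≤ 1 * (2 * s * r i) :=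
            mul_le_mul (hνi i) (hdiff z hz x hxK i) (abs_nonneg _) zero_le_one
        _ = 2 * s * r i := one_mul _
    have b0 := abs_le.1 (bd 0)
    have b1 := abs_le.1 (bd 1)
    have h2 : ⟪ν, e 2⟫ * ⟪e 2, z - x⟫ ≤ 2 * s * r 0 + 2 * s * r 1 := by
      linarith [h0, b0.1, b1.1]
    rw [real_inner_comm (z - x) (e 2)] at h2
    nlinarith [hrpos 0, hrpos 1]
  -- extreme points
  obtain ⟨zM, hzM, hzMmax⟩ := hKcomp.exists_isMaxOn (f := fun y : E3 => ⟪y, e 2⟫) hKne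
    (Continuous.continuousOn (continuous_id.inner continuous_const))
  obtain ⟨zm, hzm, hzmmin⟩ := hKcomp.exists_isMinOn (f := fun y : E3 => ⟪y, e 2⟫) hKne
    (Continuous.continuousOn (continuous_id.inner continuous_const))
  have hsupeq : sSup ((fun y => ⟪y, e 2⟫) '' K) = ⟪zM, e 2⟫ :=
    IsGreatest.csSup_eq ⟨⟨zM, hzM, rfl⟩, fun b ⟨y, hy, hby⟩ => hby ▸ hzMmax hy⟩
  have hinfeq : sInf ((fun y => ⟪y, e 2⟫) '' K) = ⟪zm, e 2⟫ :=
    IsLeast.csInf_eq ⟨⟨zm, hzm, rfl⟩, fun b ⟨y, hy, hby⟩ => hby ▸ hzmmin hy⟩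
  have hminle := le_min_iff.1 hmin
  have hM : ε * r 2 ≤ ⟪zM, e 2⟫ - ⟪x, e 2⟫ := by rw [hsupeq] at hminle; exact hminle.2
  have hm : ε * r 2 ≤ ⟪x, e 2⟫ - ⟪zm, e 2⟫ := by rw [hinfeq] at hminle; exact hminle.1
  rw [le_div_iff₀ hεr]
  rcases le_or_gt 0 ⟪ν, e 2⟫ with hsign | hsign
  · rw [abs_of_nonneg hsign]
    have hkey := key zM hzM
    rw [inner_sub_left] at hkey
    nlinarith [hrpos 1]
  · rw [abs_of_neg hsign]
    have hkey := key zm hzm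
    rw [inner_sub_left] at hkey
    nlinarith [hrpos 1]
end
end

section
/- For every c₀ ∈ (0, 1/3) and λ' ≥ 1 there exists c > 0 depending only on c₀ and λ' with the following property. Let K ⊂ ℝ³ be a convex body containing the origin o in its closure, and let E be an ellipsoid centered at the center of mass of K with E ⊂ K ⊂ 3^{3/2}E, principal radii r₁ ≤ r₂ ≤ r₃ in directions e₁, e₂, e₃, and r₃/r₂ ≥ λ'. Let I = [m, M] be the projection of K onto the e₃-axis and suppose min(o·e₃ − m, M − o·e₃) ≥ c₀ r₃. Set G := {x ∈ ∂K : min(x·e₃ − m, M − x·e₃) ≥ (c₀/3) r₃}. Then the union of the segments joining o to points of G has volume at least c · r₁ r₂ r₃. -/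
open MeasureTheory Metric Set Filter
open scoped RealInnerProductSpace ENNReal NNReal Real

noncomputable section

lemma exists_frontier_ray {K : Set E3} (hcomp : IsCompact K)
    {y : E3} (hy : y ∈ K) (hy0 : y ≠ 0) :
    ∃ τ : ℝ, 1 ≤ τ ∧ τ • y ∈ frontier K := by
  obtain ⟨C, hC⟩ := hcomp.isBounded.exists_norm_le
  have hyn : 0 < ‖y‖ := norm_pos_iff.mpr hy0
  set T : Set ℝ := {t : ℝ | t • y ∈ K} with hT
  have h1T : (1:ℝ) ∈ T := by simpa [hT] using hy
  have hTbdd : BddAbove T := by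
    refine ⟨C / ‖y‖, fun t ht => ?_⟩
    have h1 : ‖t • y‖ ≤ C := hC _ ht
    rw [norm_smul, Real.norm_eq_abs] at h1
    have : t * ‖y‖ ≤ C := le_trans (by nlinarith [le_abs_self t]) h1
    rw [le_div_iff₀ hyn]
    exact this
  have hTclosed : IsClosed T := hcomp.isClosed.preimage (by fun_prop)
  have hτT : sSup T ∈ T := hTclosed.csSup_mem ⟨1, h1T⟩ hTbdd
  have hτ1 : 1 ≤ sSup T := le_csSup hTbdd h1T
  refine ⟨sSup T, hτ1, ?_⟩
  rw [frontier, hcomp.isClosed.closure_eq]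
  refine ⟨hτT, fun hint => ?_⟩
  obtain ⟨ε, hε, hball⟩ := Metric.isOpen_iff.mp isOpen_interior _ hint
  have hmem : (sSup T + ε / (2 * ‖y‖)) ∈ T := by
    show _ • y ∈ K
    apply interior_subset
    apply hball
    rw [Metric.mem_ball, dist_eq_norm, ← sub_smul, norm_smul, Real.norm_eq_abs]
    rw [add_sub_cancel_left, abs_of_pos (by positivity)]
    rw [div_mul_eq_mul_div, mul_comm]
    rw [div_lt_iff₀ (by positivity)]
    nlinarith
  have h2 := le_csSup hTbdd hmem
  have h3 : 0 < ε / (2 * ‖y‖) := by positivity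
  linarith

lemma volume_coordBox (b : OrthonormalBasis (Fin 3) ℝ E3) (lo hi : Fin 3 → ℝ) :
    volume (b.repr ⁻¹' (WithLp.ofLp ⁻¹' (Set.univ.pi fun i => Icc (lo i) (hi i))))
      = ∏ i, ENNReal.ofReal (hi i - lo i) := by
  have hmeas : MeasurableSet (Set.univ.pi fun i : Fin 3 => Icc (lo i) (hi i)) :=
    MeasurableSet.univ_pi fun i => measurableSet_Icc
  rw [b.measurePreserving_repr.measure_preimage
    ((PiLp.volume_preserving_ofLp (Fin 3)).measurable hmeas).nullMeasurableSet]
  have h2 := (EuclideanSpace.volume_preserving_symm_measurableEquiv_toLp (Fin 3)).measure_preimage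
    (s := Set.univ.pi fun i : Fin 3 => Icc (lo i) (hi i))
    (MeasurableSet.univ_pi fun i => measurableSet_Icc).nullMeasurableSet
  have h3 : (MeasurableEquiv.toLp 2 (Fin 3 → ℝ)).symm ⁻¹'
      (Set.univ.pi fun i : Fin 3 => Icc (lo i) (hi i))
      = WithLp.ofLp ⁻¹' (Set.univ.pi fun i : Fin 3 => Icc (lo i) (hi i)) := rfl
  rw [h3] at h2
  rw [h2, volume_pi_pi]
  simp [Real.volume_Icc]

lemma onb_stuff (e : Fin 3 → E3) (hon : Orthonormal ℝ e) :
    ∃ b : OrthonormalBasis (Fin 3) ℝ E3, ∀ i, b i = e i := by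
  have hcard : Fintype.card (Fin 3) = Module.finrank ℝ E3 := by
    simp [finrank_euclideanSpace_fin]
  have hsp : ⊤ ≤ Submodule.span ℝ (Set.range e) :=
    (hon.linearIndependent.span_eq_top_of_card_eq_finrank hcard).ge
  exact ⟨OrthonormalBasis.mk hon hsp, fun i =>
    congrFun (OrthonormalBasis.coe_mk hon hsp) i⟩

set_option maxHeartbeats 1000000 in
lemma key (c₀ : ℝ) (hc01 : 0 < c₀) (hc02 : c₀ < 1/3)
    (K : Set E3) (cc : E3) (e : Fin 3 → E3) (r : Fin 3 → ℝ)
    (hrpos : ∀ i, 0 < r i) (hon : Orthonormal ℝ e)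
    (hconv : Convex ℝ K) (hcomp : IsCompact K) (h0 : (0:E3) ∈ K)
    (hcoord : ∀ k ∈ K, ∀ i, |⟪k, e i⟫ - ⟪cc, e i⟫| ≤ 9 * r i)
    (hEsub : ∀ u v w : ℝ, u ^ 2 + v ^ 2 + w ^ 2 ≤ 1 →
      cc + (u * r 0) • e 0 + (v * r 1) • e 1 + (w * r 2) • e 2 ∈ K)
    (ha2 : 0 ≤ ⟪cc, e 2⟫)
    (m M : ℝ) (p : E3) (hp : p ∈ K) (hpm : ⟪p, e 2⟫ = m)
    (hmc : m ≤ -(c₀ * r 2)) (hMc : c₀ * r 2 ≤ M) :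
    ENNReal.ofReal (c₀^4/272097792 * (r 0 * r 1 * r 2)) ≤
      volume (coneOver {x ∈ frontier K |
        min (⟪x, e 2⟫ - m) (M - ⟪x, e 2⟫) ≥ (c₀ / 3) * r 2}) := by
  obtain ⟨b, hb⟩ := onb_stuff e hon
  have hext : ∀ z z' : E3, (∀ i, ⟪z, e i⟫ = ⟪z', e i⟫) → z = z' := by
    intro z z' h
    apply b.repr.injective
    ext i
    rw [b.repr_apply_apply, b.repr_apply_apply, hb, real_inner_comm, h i, real_inner_comm]
  have hee : ∀ i j, ⟪e i, e j⟫ = if i = j then (1:ℝ) else 0 := orthonormal_iff_ite.mp hon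
  have hr0 := hrpos 0
  have hr1 := hrpos 1
  have hr2 := hrpos 2
  have hccK : cc ∈ K := by
    have := hEsub 0 0 0 (by norm_num)
    simpa using this
  have hai : ∀ i, |⟪cc, e i⟫| ≤ 9 * r i := by
    intro i
    have h := hcoord 0 h0 i
    rwa [inner_zero_left, zero_sub, abs_neg] at h
  have hpa : |m - ⟪cc, e 2⟫| ≤ 9 * r 2 := hpm ▸ hcoord p hp 2
  have ha2u : ⟪cc, e 2⟫ ≤ 9 * r 2 := (abs_le.mp (hai 2)).2
  have hmlow : -(18 * r 2) ≤ m := by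
    linarith only [(abs_le.mp hpa).1, (abs_le.mp (hai 2)).1]
  have hmneg : m < 0 := lt_of_le_of_lt hmc (neg_lt_zero.mpr (mul_pos hc01 hr2))
  obtain ⟨t₀, ht₀def⟩ : ∃ t₀ : ℝ, t₀ = c₀ / 27 := ⟨_, rfl⟩
  have ht₀pos : 0 < t₀ := by rw [ht₀def]; positivity
  have ht₀le1 : t₀ ≤ 1 := by rw [ht₀def]; linarith only [hc02]
  have hden : 0 < ⟪cc, e 2⟫ - m := by linarith only [ha2, hmneg]
  obtain ⟨t, htdef⟩ : ∃ t : ℝ, t = -m / (⟪cc, e 2⟫ - m) := ⟨_, rfl⟩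
  have htpos : 0 < t := by
    rw [htdef]; exact div_pos (by linarith only [hmneg]) hden
  have ht1 : t ≤ 1 := by
    rw [htdef, div_le_one hden]; linarith only [ha2]
  have ht0t : t₀ ≤ t := by
    rw [htdef, ht₀def, div_le_div_iff₀ (by norm_num) hden]
    have hA : ⟪cc, e 2⟫ - m ≤ 27 * r 2 := by linarith only [ha2u, hmlow]
    have hB := mul_le_mul_of_nonneg_left hA hc01.le
    linarith only [hB, hmc]
  have ht' : t * (⟪cc, e 2⟫ - m) = -m := by
    rw [htdef]; exact div_mul_cancel₀ _ hden.ne'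
  obtain ⟨ζ, hζdef⟩ : ∃ ζ : E3, ζ = p + t • (cc - p) := ⟨_, rfl⟩
  have hζK : ζ ∈ K := by
    have h := hconv hp hccK (by linarith only [ht1] : (0:ℝ) ≤ 1 - t) htpos.le (by ring)
    rw [hζdef]
    convert h using 1
    module
  have hζi : ∀ i, ⟪ζ, e i⟫ = ⟪p, e i⟫ + t * (⟪cc, e i⟫ - ⟪p, e i⟫) := by
    intro i
    rw [hζdef]
    simp only [inner_add_left, inner_sub_left, real_inner_smul_left]
  have hζ2 : ⟪ζ, e 2⟫ = 0 := by
    rw [hζi 2, hpm]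
    linear_combination ht'
  have hζb : ∀ i, |⟪ζ, e i⟫| ≤ 18 * r i := by
    intro i
    have h1 := abs_le.mp (hcoord p hp i)
    have h2 := abs_le.mp (hai i)
    have h3 : (0:ℝ) ≤ 1 - t := by linarith only [ht1]
    have hA := mul_nonneg h3 (by linarith only [h1.1] :
      (0:ℝ) ≤ ⟪p, e i⟫ - ⟪cc, e i⟫ + 9 * r i)
    have hB := mul_nonneg h3 (by linarith only [h1.2] :
      (0:ℝ) ≤ 9 * r i - (⟪p, e i⟫ - ⟪cc, e i⟫))
    have hE := mul_nonneg htpos.le (hrpos i).le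
    rw [hζi i, abs_le]
    constructor <;> linarith only [h2.1, h2.2, hA, hB, hE]
  have hv2pos : (0:ℝ) < ⟪cc, e 2⟫ + r 2 / 2 := by linarith only [ha2, hr2]
  obtain ⟨L0, hL0def⟩ : ∃ L0 : ℝ, L0 = if 0 ≤ ⟪ζ, e 0⟫ then ⟪ζ, e 0⟫ + t₀ * r 0 / 4
    else ⟪ζ, e 0⟫ - 3 * t₀ * r 0 / 8 := ⟨_, rfl⟩
  obtain ⟨lo, hlodef⟩ : ∃ lo : Fin 3 → ℝ,
    lo = ![L0, ⟪ζ, e 1⟫ - t₀ * r 1 / 8, 0] := ⟨_, rfl⟩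
  obtain ⟨hi, hhidef⟩ : ∃ hi : Fin 3 → ℝ,
    hi = ![L0 + t₀ * r 0 / 8, ⟪ζ, e 1⟫ + t₀ * r 1 / 8, c₀ * t₀ * r 2 / 432] := ⟨_, rfl⟩
  obtain ⟨Box, hBoxdef⟩ : ∃ Box : Set E3,
    Box = b.repr ⁻¹' (WithLp.ofLp ⁻¹' (Set.univ.pi fun i => Icc (lo i) (hi i))) := ⟨_, rfl⟩
  have hP0 := mul_pos ht₀pos hr0
  have hP1 := mul_pos ht₀pos hr1
  have hP2 := mul_pos ht₀pos hr2
  have hsub : Box ⊆ coneOver {x ∈ frontier K |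
      min (⟪x, e 2⟫ - m) (M - ⟪x, e 2⟫) ≥ (c₀ / 3) * r 2} := by
    intro y hy
    have hyc : ∀ i, ⟪y, e i⟫ ∈ Icc (lo i) (hi i) := by
      intro i
      rw [hBoxdef] at hy
      have := hy i (Set.mem_univ i)
      rwa [b.repr_apply_apply, hb, real_inner_comm] at this
    have hc0 := hyc 0
    have hc1 := hyc 1
    have hc2 := hyc 2
    rw [hlodef, hhidef] at hc0 hc1 hc2
    simp only [Matrix.cons_val_zero, Matrix.cons_val_one, Matrix.head_cons] at hc0 hc1
    have hc2' : (0:ℝ) ≤ ⟪y, e 2⟫ ∧ ⟪y, e 2⟫ ≤ c₀ * t₀ * r 2 / 432 := by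
      constructor
      · have := hc2.1; simpa using this
      · have := hc2.2; simpa using this
    have habs0 : t₀ * r 0 / 4 ≤ |⟪y, e 0⟫| ∧ |⟪y, e 0⟫ - ⟪ζ, e 0⟫| ≤ 3 * t₀ * r 0 / 8 := by
      rcases le_or_gt 0 ⟪ζ, e 0⟫ with hz | hz
      · rw [hL0def, if_pos hz] at hc0
        constructor
        · exact le_trans (by linarith only [hc0.1, hz, hP0]) (le_abs_self _)
        · rw [abs_le]
          constructor
          · linarith only [hc0.1, hP0]
          · linarith only [hc0.2]
      · rw [hL0def, if_neg (not_le.mpr hz)] at hc0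
        constructor
        · refine le_trans ?_ (neg_le_abs _)
          linarith only [hc0.2, hz, hP0]
        · rw [abs_le]
          constructor
          · linarith only [hc0.1]
          · linarith only [hc0.2, hP0]
    have hdist1 : |⟪y, e 1⟫ - ⟪ζ, e 1⟫| ≤ t₀ * r 1 / 8 := by
      rw [abs_le]
      constructor
      · linarith only [hc1.1]
      · linarith only [hc1.2]
    obtain ⟨s, hsdef⟩ : ∃ s : ℝ, s = ⟪y, e 2⟫ / (⟪cc, e 2⟫ + r 2 / 2) := ⟨_, rfl⟩
    have hs0 : 0 ≤ s := by rw [hsdef]; exact div_nonneg hc2'.1 hv2pos.le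
    have hs1 : s ≤ t₀ / 216 := by
      rw [hsdef, div_le_iff₀ hv2pos]
      have hA := mul_nonneg ht₀pos.le ha2
      have hB := mul_le_mul_of_nonneg_right (le_of_lt hc02) hP2.le
      linarith only [hc2'.2, hA, hB, hP2]
    have hsle1 : s ≤ 1 := by linarith only [hs1, ht₀le1, ht₀pos]
    obtain ⟨w0, hw0def⟩ : ∃ w0 : ℝ,
      w0 = (⟪y, e 0⟫ - ⟪ζ, e 0⟫ - s * (⟪cc, e 0⟫ - ⟪ζ, e 0⟫)) / (t * r 0) := ⟨_, rfl⟩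
    obtain ⟨w1, hw1def⟩ : ∃ w1 : ℝ,
      w1 = (⟪y, e 1⟫ - ⟪ζ, e 1⟫ - s * (⟪cc, e 1⟫ - ⟪ζ, e 1⟫)) / (t * r 1) := ⟨_, rfl⟩
    have hB0 : |⟪cc, e 0⟫ - ⟪ζ, e 0⟫| ≤ 27 * r 0 := by
      have h1 := abs_le.mp (hai 0)
      have h2 := abs_le.mp (hζb 0)
      rw [abs_le]
      constructor
      · linarith only [h1.1, h2.2]
      · linarith only [h1.2, h2.1]
    have hB1 : |⟪cc, e 1⟫ - ⟪ζ, e 1⟫| ≤ 27 * r 1 := by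
      have h1 := abs_le.mp (hai 1)
      have h2 := abs_le.mp (hζb 1)
      rw [abs_le]
      constructor
      · linarith only [h1.1, h2.2]
      · linarith only [h1.2, h2.1]
    have hsB0 : |s * (⟪cc, e 0⟫ - ⟪ζ, e 0⟫)| ≤ t₀ * r 0 / 8 := by
      rw [abs_mul, abs_of_nonneg hs0]
      calc s * |⟪cc, e 0⟫ - ⟪ζ, e 0⟫| ≤ (t₀ / 216) * (27 * r 0) :=
            mul_le_mul hs1 hB0 (abs_nonneg _) (by linarith only [ht₀pos])
        _ = t₀ * r 0 / 8 := by ring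
    have hsB1 : |s * (⟪cc, e 1⟫ - ⟪ζ, e 1⟫)| ≤ t₀ * r 1 / 8 := by
      rw [abs_mul, abs_of_nonneg hs0]
      calc s * |⟪cc, e 1⟫ - ⟪ζ, e 1⟫| ≤ (t₀ / 216) * (27 * r 1) :=
            mul_le_mul hs1 hB1 (abs_nonneg _) (by linarith only [ht₀pos])
        _ = t₀ * r 1 / 8 := by ring
    have htr0 : (0:ℝ) < t * r 0 := mul_pos htpos hr0
    have htr1 : (0:ℝ) < t * r 1 := mul_pos htpos hr1
    have hr0tt := mul_le_mul_of_nonneg_left ht0t hr0.le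
    have hr1tt := mul_le_mul_of_nonneg_left ht0t hr1.le
    have hw0b : |w0| ≤ 1 / 2 := by
      rw [hw0def, abs_div, abs_of_pos htr0, div_le_iff₀ htr0]
      have h1 := abs_le.mp habs0.2
      have h2 := abs_le.mp hsB0
      rw [abs_le]
      constructor
      · linarith only [h1.1, h2.2, hr0tt]
      · linarith only [h1.2, h2.1, hr0tt]
    have hw1b : |w1| ≤ 1 / 2 := by
      rw [hw1def, abs_div, abs_of_pos htr1, div_le_iff₀ htr1]
      have h1 := abs_le.mp hdist1
      have h2 := abs_le.mp hsB1
      rw [abs_le]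
      constructor
      · linarith only [h1.1, h2.2, hr1tt, htr1.le]
      · linarith only [h1.2, h2.1, hr1tt, htr1.le]
    have hsq0 : w0 ^ 2 ≤ (1/2) ^ 2 :=
      sq_le_sq' (by linarith only [(abs_le.mp hw0b).1]) (abs_le.mp hw0b).2
    have hsq1 : w1 ^ 2 ≤ (1/2) ^ 2 :=
      sq_le_sq' (by linarith only [(abs_le.mp hw1b).1]) (abs_le.mp hw1b).2
    have he00 : ⟪e 0, e 0⟫ = (1:ℝ) := by rw [hee]; simp
    have he11 : ⟪e 1, e 1⟫ = (1:ℝ) := by rw [hee]; simp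
    have he22 : ⟪e 2, e 2⟫ = (1:ℝ) := by rw [hee]; simp
    have he01 : ⟪e 0, e 1⟫ = (0:ℝ) := by simp [hee]
    have he02 : ⟪e 0, e 2⟫ = (0:ℝ) := by simp [hee]
    have he10 : ⟪e 1, e 0⟫ = (0:ℝ) := by simp [hee]
    have he12 : ⟪e 1, e 2⟫ = (0:ℝ) := by simp [hee]
    have he20 : ⟪e 2, e 0⟫ = (0:ℝ) := by simp [hee]
    have he21 : ⟪e 2, e 1⟫ = (0:ℝ) := by simp [hee]
    obtain ⟨z1, hz1def⟩ : ∃ z1 : E3,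
      z1 = cc + (w0 * r 0) • e 0 + (w1 * r 1) • e 1 + ((0:ℝ) * r 2) • e 2 := ⟨_, rfl⟩
    obtain ⟨z2, hz2def⟩ : ∃ z2 : E3, z2 = cc + ((t * w0) * r 0) • e 0 + ((t * w1) * r 1) • e 1
      + ((1/2 : ℝ) * r 2) • e 2 := ⟨_, rfl⟩
    have hz1K : z1 ∈ K := by
      rw [hz1def]
      exact hEsub w0 w1 0 (by linarith only [hsq0, hsq1])
    have hz2K : z2 ∈ K := by
      rw [hz2def]
      refine hEsub (t * w0) (t * w1) (1/2) ?_
      have ht2 : (0:ℝ) ≤ 1 - t^2 := by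
        have h6 := mul_nonneg (by linarith only [ht1] : (0:ℝ) ≤ 1 - t)
          (by linarith only [htpos] : (0:ℝ) ≤ 1 + t)
        linarith only [h6]
      have hQ0 := mul_nonneg ht2 (sq_nonneg w0)
      have hQ1 := mul_nonneg ht2 (sq_nonneg w1)
      linarith only [hQ0, hQ1, hsq0, hsq1]
    have hz1c0 : ⟪z1, e 0⟫ = ⟪cc, e 0⟫ + w0 * r 0 := by
      rw [hz1def]
      simp only [inner_add_left, real_inner_smul_left, he00, he10, he20]
      ring
    have hz1c1 : ⟪z1, e 1⟫ = ⟪cc, e 1⟫ + w1 * r 1 := by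
      rw [hz1def]
      simp only [inner_add_left, real_inner_smul_left, he01, he11, he21]
      ring
    have hz1c2 : ⟪z1, e 2⟫ = ⟪cc, e 2⟫ := by
      rw [hz1def]
      simp only [inner_add_left, real_inner_smul_left, he02, he12, he22]
      ring
    have hz2c0 : ⟪z2, e 0⟫ = ⟪cc, e 0⟫ + (t * w0) * r 0 := by
      rw [hz2def]
      simp only [inner_add_left, real_inner_smul_left, he00, he10, he20]
      ring
    have hz2c1 : ⟪z2, e 1⟫ = ⟪cc, e 1⟫ + (t * w1) * r 1 := by
      rw [hz2def]
      simp only [inner_add_left, real_inner_smul_left, he01, he11, he21]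
      ring
    have hz2c2 : ⟪z2, e 2⟫ = ⟪cc, e 2⟫ + (1/2) * r 2 := by
      rw [hz2def]
      simp only [inner_add_left, real_inner_smul_left, he02, he12, he22]
      ring
    have hext3 : ∀ z z' : E3, ⟪z, e 0⟫ = ⟪z', e 0⟫ → ⟪z, e 1⟫ = ⟪z', e 1⟫ →
        ⟪z, e 2⟫ = ⟪z', e 2⟫ → z = z' := by
      intro z z' g0 g1 g2
      apply hext
      intro i
      fin_cases i <;> assumption
    have hlin : (1 - t) * m + t * ⟪cc, e 2⟫ = 0 := by linear_combination ht'
    have hsv : s * (⟪cc, e 2⟫ + r 2 / 2) = ⟪y, e 2⟫ := by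
      rw [hsdef]; exact div_mul_cancel₀ _ hv2pos.ne'
    have expand : ∀ i, ⟪(1 - s) • ((1 - t) • p + t • z1) + s • z2, e i⟫
        = (1 - s) * ((1 - t) * ⟪p, e i⟫ + t * ⟪z1, e i⟫) + s * ⟪z2, e i⟫ := by
      intro i
      simp only [inner_add_left, real_inner_smul_left]
    have hyeq : y = (1 - s) • ((1 - t) • p + t • z1) + s • z2 := by
      refine (hext3 _ _ ?_ ?_ ?_).symm
      · rw [expand 0, hz1c0, hz2c0, hw0def, hζi 0]
        field_simp
        ring
      · rw [expand 1, hz1c1, hz2c1, hw1def, hζi 1]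
        field_simp
        ring
      · rw [expand 2, hz1c2, hz2c2, hpm, hlin]
        linear_combination hsv
    have hyK : y ∈ K := by
      rw [hyeq]
      exact hconv (hconv hp hz1K (by linarith only [ht1]) htpos.le (by ring)) hz2K
        (by linarith only [hsle1]) hs0 (by ring)
    have hyne : y ≠ 0 := by
      intro h
      have h5 := habs0.1
      rw [h, inner_zero_left, abs_zero] at h5
      linarith only [h5, hP0]
    obtain ⟨τ, hτ1, hxf⟩ := exists_frontier_ray hcomp hyK hyne
    have hτpos : (0:ℝ) < τ := lt_of_lt_of_le one_pos hτ1
    have hxK : τ • y ∈ K := hcomp.isClosed.frontier_subset hxf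
    have hx0 : ⟪τ • y, e 0⟫ = τ * ⟪y, e 0⟫ := real_inner_smul_left _ _ _
    have hx2 : ⟪τ • y, e 2⟫ = τ * ⟪y, e 2⟫ := real_inner_smul_left _ _ _
    have hx0b : |τ * ⟪y, e 0⟫| ≤ 18 * r 0 := by
      have h1 := abs_le.mp (hcoord _ hxK 0)
      rw [hx0] at h1
      have h2 := abs_le.mp (hai 0)
      rw [abs_le]
      constructor
      · linarith only [h1.1, h2.1]
      · linarith only [h1.2, h2.2]
    have hcr2 : (0:ℝ) ≤ c₀ * r 2 := (mul_pos hc01 hr2).le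
    have hchain : 27 * r 0 * |⟪y, e 2⟫| ≤ c₀ * r 2 * |⟪y, e 0⟫| := by
      have hξ2b : |⟪y, e 2⟫| ≤ c₀ * t₀ * r 2 / 432 := by
        rw [abs_le]
        exact ⟨by linarith only [hc2'.1, hc2'.2, mul_pos (mul_pos hc01 ht₀pos) hr2], hc2'.2⟩
      have H1 := mul_le_mul_of_nonneg_left hξ2b (by linarith only [hr0] : (0:ℝ) ≤ 27 * r 0)
      have H2 := mul_le_mul_of_nonneg_left habs0.1 hcr2
      have H3 := mul_nonneg (mul_nonneg (mul_nonneg hc01.le ht₀pos.le) hr0.le) hr2.le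
      linarith only [H1, H2, H3]
    have hX2b : |τ * ⟪y, e 2⟫| ≤ 2/3 * (c₀ * r 2) := by
      have h1 := mul_le_mul_of_nonneg_left hchain hτpos.le
      have h2 : τ * |⟪y, e 0⟫| = |τ * ⟪y, e 0⟫| := by
        rw [abs_mul, abs_of_pos hτpos]
      have h3 : τ * |⟪y, e 2⟫| = |τ * ⟪y, e 2⟫| := by
        rw [abs_mul, abs_of_pos hτpos]
      have H3 := mul_le_mul_of_nonneg_left hx0b hcr2
      have h2' := congrArg (fun z => c₀ * r 2 * z) h2
      have h3' := congrArg (fun z => 27 * r 0 * z) h3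
      have hfin : (27 * r 0) * |τ * ⟪y, e 2⟫| ≤ (27 * r 0) * (2/3 * (c₀ * r 2)) := by
        linarith only [h1, H3, h2', h3']
      exact le_of_mul_le_mul_left hfin (by linarith only [hr0])
    have h4 := abs_le.mp hX2b
    have hxG : τ • y ∈ {x ∈ frontier K |
        min (⟪x, e 2⟫ - m) (M - ⟪x, e 2⟫) ≥ (c₀ / 3) * r 2} := by
      refine ⟨hxf, ?_⟩
      rw [ge_iff_le, le_min_iff, hx2]
      constructor
      · linarith only [h4.1, hmc]
      · linarith only [h4.2, hMc]
    exact ⟨τ • y, hxG, τ⁻¹, ⟨by positivity, inv_le_one_of_one_le₀ hτ1⟩,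
      by rw [smul_smul, inv_mul_cancel₀ hτpos.ne', one_smul]⟩
  have hlen0 : (0:ℝ) ≤ t₀ * r 0 / 8 := by linarith only [hP0]
  have hlen01 : (0:ℝ) ≤ t₀ * r 0 / 8 * (t₀ * r 1 / 4) :=
    mul_nonneg hlen0 (by linarith only [hP1])
  calc ENNReal.ofReal (c₀^4/272097792 * (r 0 * r 1 * r 2))
      = volume Box := by
        rw [hBoxdef, volume_coordBox, Fin.prod_univ_three, hlodef, hhidef]
        simp only [Matrix.cons_val_zero, Matrix.cons_val_one, Matrix.head_cons]
        rw [show (![L0 + t₀ * r 0 / 8, ⟪ζ, e 1⟫ + t₀ * r 1 / 8, c₀ * t₀ * r 2 / 432] :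
              Fin 3 → ℝ) 2 = c₀ * t₀ * r 2 / 432 by simp,
            show (![L0, ⟪ζ, e 1⟫ - t₀ * r 1 / 8, 0] : Fin 3 → ℝ) 2 = 0 by simp]
        rw [show L0 + t₀ * r 0 / 8 - L0 = t₀ * r 0 / 8 by ring,
            show ⟪ζ, e 1⟫ + t₀ * r 1 / 8 - (⟪ζ, e 1⟫ - t₀ * r 1 / 8) = t₀ * r 1 / 4 by ring,
            show c₀ * t₀ * r 2 / 432 - 0 = c₀ * t₀ * r 2 / 432 by ring]
        rw [← ENNReal.ofReal_mul hlen0, ← ENNReal.ofReal_mul hlen01]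
        congr 1
        rw [ht₀def]
        ring
    _ ≤ _ := measure_mono hsub

set_option maxHeartbeats 1000000 in
theorem stmt7 (c₀ lam' : ℝ) (hc₀ : c₀ ∈ Set.Ioo (0:ℝ) (1/3)) (hlam' : 1 ≤ lam') :
    ∃ c > 0, ∀ (K E : Set E3) (cc : E3) (e : Fin 3 → E3) (r : Fin 3 → ℝ),
      IsConvexBody K → 0 ∈ K →
      IsEllipsoid E cc e r → cc = centerOfMass K → IsJohnEllipsoid K E cc →
      r 0 ≤ r 1 → r 1 ≤ r 2 → lam' ≤ r 2 / r 1 →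
      min (⟪(0:E3), e 2⟫ - sInf ((fun y => ⟪y, e 2⟫) '' K))
          (sSup ((fun y => ⟪y, e 2⟫) '' K) - ⟪(0:E3), e 2⟫) ≥ c₀ * r 2 →
      ENNReal.ofReal (c * (r 0 * r 1 * r 2)) ≤
        volume (coneOver {x ∈ frontier K |
          min (⟪x, e 2⟫ - sInf ((fun y => ⟪y, e 2⟫) '' K))
              (sSup ((fun y => ⟪y, e 2⟫) '' K) - ⟪x, e 2⟫) ≥ (c₀ / 3) * r 2}) := by
  obtain ⟨hc01, hc02⟩ := hc₀
  refine ⟨c₀^4/272097792, by positivity, ?_⟩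
  intro K E cc e r hK h0 hE hcm hJ hr01 hr12 hlam hmin
  obtain ⟨hconv, hcomp, hintr⟩ := hK
  obtain ⟨hrpos, hon, hEeq⟩ := hE
  obtain ⟨hEK, hKdil⟩ := hJ
  have hKne : K.Nonempty := ⟨0, h0⟩
  have hcont : Continuous fun y : E3 => ⟪y, e 2⟫ := continuous_id.inner continuous_const
  obtain ⟨pmin, hpmin, hminOn⟩ := hcomp.exists_isMinOn hKne hcont.continuousOn
  obtain ⟨pmax, hpmax, hmaxOn⟩ := hcomp.exists_isMaxOn hKne hcont.continuousOn
  have hmval : sInf ((fun y => ⟪y, e 2⟫) '' K) = ⟪pmin, e 2⟫ := by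
    apply IsLeast.csInf_eq
    constructor
    · exact ⟨pmin, hpmin, rfl⟩
    · rintro b ⟨k, hk, rfl⟩
      exact isMinOn_iff.mp hminOn k hk
  have hMval : sSup ((fun y => ⟪y, e 2⟫) '' K) = ⟪pmax, e 2⟫ := by
    apply IsGreatest.csSup_eq
    constructor
    · exact ⟨pmax, hpmax, rfl⟩
    · rintro b ⟨k, hk, rfl⟩
      exact isMaxOn_iff.mp hmaxOn k hk
  have h00 : ⟪(0:E3), e 2⟫ = (0:ℝ) := inner_zero_left _
  rw [ge_iff_le, le_min_iff, h00] at hmin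
  have hmc : sInf ((fun y => ⟪y, e 2⟫) '' K) ≤ -(c₀ * r 2) := by linarith only [hmin.1]
  have hMc : c₀ * r 2 ≤ sSup ((fun y => ⟪y, e 2⟫) '' K) := by linarith only [hmin.2]
  have hee : ∀ i j, ⟪e i, e j⟫ = if i = j then (1:ℝ) else 0 := orthonormal_iff_ite.mp hon
  have hΛ0 : (0:ℝ) ≤ (3:ℝ) ^ ((3:ℝ)/2) := by positivity
  have hΛ : (3:ℝ) ^ ((3:ℝ)/2) ≤ 9 := by
    calc (3:ℝ) ^ ((3:ℝ)/2) ≤ (3:ℝ) ^ (2:ℝ) :=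
          Real.rpow_le_rpow_of_exponent_le (by norm_num) (by norm_num)
      _ = 9 := by
          rw [show (2:ℝ) = ((2:ℕ):ℝ) by norm_num, Real.rpow_natCast]
          norm_num
  have hcoord : ∀ k ∈ K, ∀ i, |⟪k, e i⟫ - ⟪cc, e i⟫| ≤ 9 * r i := by
    intro k hk i
    obtain ⟨x, hxE, hxk⟩ := hKdil hk
    have hxE' : (∑ j, (⟪x - cc, e j⟫ / r j)^2) ≤ 1 := by
      rw [hEeq] at hxE
      exact hxE
    have hsingle : (⟪x - cc, e i⟫ / r i)^2 ≤ 1 :=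
      le_trans (Finset.single_le_sum (f := fun j => (⟪x - cc, e j⟫ / r j)^2)
        (fun j _ => sq_nonneg _) (Finset.mem_univ i)) hxE'
    have habs : |⟪x - cc, e i⟫| ≤ r i := by
      have h5 : |⟪x - cc, e i⟫ / r i| ≤ 1 := by
        rw [abs_le]
        constructor <;> nlinarith only [hsingle, sq_nonneg (⟪x - cc, e i⟫ / r i - 1),
          sq_nonneg (⟪x - cc, e i⟫ / r i + 1)]
      rwa [abs_div, abs_of_pos (hrpos i), div_le_one (hrpos i)] at h5
    rw [← hxk]
    have h6 : ⟪cc + (3:ℝ)^((3:ℝ)/2) • (x - cc), e i⟫ - ⟪cc, e i⟫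
        = (3:ℝ)^((3:ℝ)/2) * ⟪x - cc, e i⟫ := by
      simp only [inner_add_left, real_inner_smul_left]
      ring
    rw [h6, abs_mul, abs_of_nonneg hΛ0]
    exact mul_le_mul hΛ habs (abs_nonneg _) (by norm_num)
  have he00 : ⟪e 0, e 0⟫ = (1:ℝ) := by rw [hee]; simp
  have he11 : ⟪e 1, e 1⟫ = (1:ℝ) := by rw [hee]; simp
  have he22 : ⟪e 2, e 2⟫ = (1:ℝ) := by rw [hee]; simp
  have he01 : ⟪e 0, e 1⟫ = (0:ℝ) := by simp [hee]
  have he02 : ⟪e 0, e 2⟫ = (0:ℝ) := by simp [hee]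
  have he10 : ⟪e 1, e 0⟫ = (0:ℝ) := by simp [hee]
  have he12 : ⟪e 1, e 2⟫ = (0:ℝ) := by simp [hee]
  have he20 : ⟪e 2, e 0⟫ = (0:ℝ) := by simp [hee]
  have he21 : ⟪e 2, e 1⟫ = (0:ℝ) := by simp [hee]
  have hEsub : ∀ u v w : ℝ, u ^ 2 + v ^ 2 + w ^ 2 ≤ 1 →
      cc + (u * r 0) • e 0 + (v * r 1) • e 1 + (w * r 2) • e 2 ∈ K := by
    intro u v w huv
    apply hEK
    rw [hEeq]
    show (∑ j, (⟪cc + (u * r 0) • e 0 + (v * r 1) • e 1 + (w * r 2) • e 2 - cc, e j⟫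
      / r j)^2) ≤ 1
    have hc0 : ⟪cc + (u * r 0) • e 0 + (v * r 1) • e 1 + (w * r 2) • e 2 - cc, e 0⟫
        = u * r 0 := by
      simp only [inner_sub_left, inner_add_left, real_inner_smul_left, he00, he10, he20]
      ring
    have hc1 : ⟪cc + (u * r 0) • e 0 + (v * r 1) • e 1 + (w * r 2) • e 2 - cc, e 1⟫
        = v * r 1 := by
      simp only [inner_sub_left, inner_add_left, real_inner_smul_left, he01, he11, he21]
      ring
    have hc2 : ⟪cc + (u * r 0) • e 0 + (v * r 1) • e 1 + (w * r 2) • e 2 - cc, e 2⟫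
        = w * r 2 := by
      simp only [inner_sub_left, inner_add_left, real_inner_smul_left, he02, he12, he22]
      ring
    rw [Fin.sum_univ_three, hc0, hc1, hc2,
      mul_div_cancel_right₀ u (hrpos 0).ne', mul_div_cancel_right₀ v (hrpos 1).ne',
      mul_div_cancel_right₀ w (hrpos 2).ne']
    exact huv
  rcases le_or_gt 0 ⟪cc, e 2⟫ with hs | hs
  · exact key c₀ hc01 hc02 K cc e r hrpos hon hconv hcomp h0 hcoord hEsub hs
      (sInf ((fun y => ⟪y, e 2⟫) '' K)) (sSup ((fun y => ⟪y, e 2⟫) '' K))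
      pmin hpmin hmval.symm hmc hMc
  · obtain ⟨e', he'def⟩ : ∃ e' : Fin 3 → E3, e' = ![e 0, e 1, -e 2] := ⟨_, rfl⟩
    have h'0 : e' 0 = e 0 := by rw [he'def]; simp
    have h'1 : e' 1 = e 1 := by rw [he'def]; simp
    have h'2 : e' 2 = -e 2 := by rw [he'def]; simp
    have hon' : Orthonormal ℝ e' := by
      rw [orthonormal_iff_ite]
      intro i j
      fin_cases i <;> fin_cases j <;>
        simp [h'0, h'1, h'2, inner_neg_left, inner_neg_right, he00, he11, he22,
          he01, he02, he10, he12, he20, he21, hon.1 0, hon.1 1, hon.1 2]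
    have hcoord' : ∀ k ∈ K, ∀ i, |⟪k, e' i⟫ - ⟪cc, e' i⟫| ≤ 9 * r i := by
      intro k hk i
      fin_cases i
      · show |⟪k, e' 0⟫ - ⟪cc, e' 0⟫| ≤ 9 * r 0
        rw [h'0]; exact hcoord k hk 0
      · show |⟪k, e' 1⟫ - ⟪cc, e' 1⟫| ≤ 9 * r 1
        rw [h'1]; exact hcoord k hk 1
      · show |⟪k, e' 2⟫ - ⟪cc, e' 2⟫| ≤ 9 * r 2
        rw [h'2, inner_neg_right, inner_neg_right,
          show -⟪k, e 2⟫ - -⟪cc, e 2⟫ = -(⟪k, e 2⟫ - ⟪cc, e 2⟫) by ring, abs_neg]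
        exact hcoord k hk 2
    have hEsub' : ∀ u v w : ℝ, u ^ 2 + v ^ 2 + w ^ 2 ≤ 1 →
        cc + (u * r 0) • e' 0 + (v * r 1) • e' 1 + (w * r 2) • e' 2 ∈ K := by
      intro u v w huv
      have h7 := hEsub u v (-w) (by rw [neg_pow]; simpa using huv)
      have heq : cc + (u * r 0) • e' 0 + (v * r 1) • e' 1 + (w * r 2) • e' 2
          = cc + (u * r 0) • e 0 + (v * r 1) • e 1 + ((-w) * r 2) • e 2 := by
        rw [h'0, h'1, h'2]
        module
      rw [heq]
      exact h7
    have ha2' : 0 ≤ ⟪cc, e' 2⟫ := by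
      rw [h'2, inner_neg_right]
      linarith only [hs]
    have hpm' : ⟪pmax, e' 2⟫ = -(sSup ((fun y => ⟪y, e 2⟫) '' K)) := by
      rw [h'2, inner_neg_right, hMval]
    have hmc' : -(sSup ((fun y => ⟪y, e 2⟫) '' K)) ≤ -(c₀ * r 2) := by
      linarith only [hMc]
    have hMc' : c₀ * r 2 ≤ -(sInf ((fun y => ⟪y, e 2⟫) '' K)) := by
      linarith only [hmc]
    have hkey := key c₀ hc01 hc02 K cc e' r hrpos hon' hconv hcomp h0 hcoord' hEsub' ha2'
      (-(sSup ((fun y => ⟪y, e 2⟫) '' K))) (-(sInf ((fun y => ⟪y, e 2⟫) '' K)))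
      pmax hpmax hpm' hmc' hMc'
    have hset : {x ∈ frontier K |
        min (⟪x, e' 2⟫ - -(sSup ((fun y => ⟪y, e 2⟫) '' K)))
          (-(sInf ((fun y => ⟪y, e 2⟫) '' K)) - ⟪x, e' 2⟫) ≥ (c₀ / 3) * r 2}
        = {x ∈ frontier K |
        min (⟪x, e 2⟫ - sInf ((fun y => ⟪y, e 2⟫) '' K))
          (sSup ((fun y => ⟪y, e 2⟫) '' K) - ⟪x, e 2⟫) ≥ (c₀ / 3) * r 2} := by
      ext x
      have hxn : ⟪x, e' 2⟫ = -⟪x, e 2⟫ := by rw [h'2, inner_neg_right]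
      simp only [Set.mem_sep_iff, ge_iff_le, le_min_iff, hxn]
      constructor
      · rintro ⟨hf, h1, h2⟩
        exact ⟨hf, by linarith only [h2], by linarith only [h1]⟩
      · rintro ⟨hf, h1, h2⟩
        exact ⟨hf, by linarith only [h2], by linarith only [h1]⟩
    rwa [hset] at hkey
end
end

section
/- There is an absolute constant C > 0 with the following property. Let K ⊂ ℝ³ be a convex body, e₁, e₂, e₃ an orthonormal basis, and suppose K ⊂ 3^{3/2}E for an ellipsoid E with principal radii r₁ ≤ r₂ ≤ r₃ along e₁, e₂, e₃. Let K' denote the orthogonal projection of K onto the e₂e₃-plane, let d > 0, and set G := {x ∈ ∂K : dist(x', ∂K') ≥ d}, where x' is the projection of x onto the e₂e₃-plane. Let F ⊂ S² be the set of all outer unit normals of K attained at points of G. Then the spherical Lebesgue measure of F satisfies H²(F) ≤ C (r₁/d)². -/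
open MeasureTheory Metric Set Filter
open Topology
open scoped RealInnerProductSpace ENNReal NNReal Real

noncomputable section

/-- Orthogonal projection onto the plane spanned by `e 1` and `e 2` (the `e₂e₃`-plane). -/
def projPlane (e : Fin 3 → E3) (x : E3) : E3 := ⟪x, e 1⟫ • e 1 + ⟪x, e 2⟫ • e 2


-- helpers
lemma exists_onb {e : Fin 3 → E3} (he : Orthonormal ℝ e) :
    ∃ b : OrthonormalBasis (Fin 3) ℝ E3, ⇑b = e := by
  have hcard : Fintype.card (Fin 3) = Module.finrank ℝ E3 := by
    simp [finrank_euclideanSpace]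
  have hsp : ⊤ ≤ Submodule.span ℝ (Set.range e) :=
    (he.linearIndependent.span_eq_top_of_card_eq_finrank hcard).ge
  exact ⟨OrthonormalBasis.mk he hsp, OrthonormalBasis.coe_mk he hsp⟩

lemma inner_expand {e : Fin 3 → E3} (he : Orthonormal ℝ e) (x y : E3) :
    ⟪x, y⟫ = ⟪x, e 0⟫ * ⟪e 0, y⟫ + ⟪x, e 1⟫ * ⟪e 1, y⟫ + ⟪x, e 2⟫ * ⟪e 2, y⟫ := by
  obtain ⟨b, hb⟩ := exists_onb he
  have h := b.sum_inner_mul_inner x y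
  rw [Fin.sum_univ_three] at h
  simp only [hb] at h
  linarith

lemma vec_expand {e : Fin 3 → E3} (he : Orthonormal ℝ e) (x : E3) :
    x = ⟪e 0, x⟫ • e 0 + ⟪e 1, x⟫ • e 1 + ⟪e 2, x⟫ • e 2 := by
  obtain ⟨b, hb⟩ := exists_onb he
  have h := b.sum_repr' x
  rw [Fin.sum_univ_three] at h
  simp only [hb] at h
  exact h.symm


section proj
variable {e : Fin 3 → E3}

lemma on_inner (he : Orthonormal ℝ e) (i j : Fin 3) :
    ⟪e i, e j⟫ = if i = j then (1:ℝ) else 0 := orthonormal_iff_ite.mp he i j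

lemma projPlane_add (x y : E3) :
    projPlane e (x + y) = projPlane e x + projPlane e y := by
  simp only [projPlane, inner_add_left, add_smul]; abel

lemma projPlane_sub (x y : E3) :
    projPlane e (x - y) = projPlane e x - projPlane e y := by
  simp only [projPlane, inner_sub_left, sub_smul]; abel

lemma projPlane_smul (t : ℝ) (x : E3) :
    projPlane e (t • x) = t • projPlane e x := by
  simp only [projPlane, real_inner_smul_left, smul_add, smul_smul]

lemma projPlane_e1 (he : Orthonormal ℝ e) : projPlane e (e 1) = e 1 := by
  simp only [projPlane, on_inner he, (by decide : ¬(2:Fin 3) = 1), (by decide : ¬(1:Fin 3) = 2), (by decide : ¬(0:Fin 3) = 1), (by decide : ¬(0:Fin 3) = 2), (by decide : ¬(1:Fin 3) = 0), (by decide : ¬(2:Fin 3) = 0)]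
  norm_num

lemma projPlane_e2 (he : Orthonormal ℝ e) : projPlane e (e 2) = e 2 := by
  simp only [projPlane, on_inner he, (by decide : ¬(2:Fin 3) = 1), (by decide : ¬(1:Fin 3) = 2), (by decide : ¬(0:Fin 3) = 1), (by decide : ¬(0:Fin 3) = 2), (by decide : ¬(1:Fin 3) = 0), (by decide : ¬(2:Fin 3) = 0)]
  norm_num

lemma projPlane_e0 (he : Orthonormal ℝ e) : projPlane e (e 0) = 0 := by
  simp only [projPlane, on_inner he, (by decide : ¬(2:Fin 3) = 1), (by decide : ¬(1:Fin 3) = 2), (by decide : ¬(0:Fin 3) = 1), (by decide : ¬(0:Fin 3) = 2), (by decide : ¬(1:Fin 3) = 0), (by decide : ¬(2:Fin 3) = 0)]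
  norm_num

lemma projPlane_idem (he : Orthonormal ℝ e) (x : E3) :
    projPlane e (projPlane e x) = projPlane e x := by
  simp only [projPlane, inner_add_left, real_inner_smul_left, on_inner he, (by decide : ¬(2:Fin 3) = 1), (by decide : ¬(1:Fin 3) = 2), (by decide : ¬(0:Fin 3) = 1), (by decide : ¬(0:Fin 3) = 2), (by decide : ¬(1:Fin 3) = 0), (by decide : ¬(2:Fin 3) = 0)]
  norm_num

lemma inner_projPlane_1 (he : Orthonormal ℝ e) (x : E3) :
    ⟪projPlane e x, e 1⟫ = ⟪x, e 1⟫ := by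
  simp only [projPlane, inner_add_left, real_inner_smul_left, on_inner he, (by decide : ¬(2:Fin 3) = 1), (by decide : ¬(1:Fin 3) = 2), (by decide : ¬(0:Fin 3) = 1), (by decide : ¬(0:Fin 3) = 2), (by decide : ¬(1:Fin 3) = 0), (by decide : ¬(2:Fin 3) = 0)]
  norm_num

lemma inner_projPlane_2 (he : Orthonormal ℝ e) (x : E3) :
    ⟪projPlane e x, e 2⟫ = ⟪x, e 2⟫ := by
  simp only [projPlane, inner_add_left, real_inner_smul_left, on_inner he, (by decide : ¬(2:Fin 3) = 1), (by decide : ¬(1:Fin 3) = 2), (by decide : ¬(0:Fin 3) = 1), (by decide : ¬(0:Fin 3) = 2), (by decide : ¬(1:Fin 3) = 0), (by decide : ¬(2:Fin 3) = 0)]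
  norm_num

lemma projPlane_continuous : Continuous (projPlane e) := by
  unfold projPlane
  fun_prop

/-- decomposition `a = ⟪a, e 0⟫ • e 0 + projPlane e a` -/
lemma decomp (he : Orthonormal ℝ e) (a : E3) :
    a = ⟪a, e 0⟫ • e 0 + projPlane e a := by
  have h := vec_expand he a
  rw [real_inner_comm a (e 0), real_inner_comm a (e 1), real_inner_comm a (e 2)] at h
  rw [projPlane, ← add_assoc, ← h]

end proj


lemma deep_ball {K : Set E3} (hKcomp : IsCompact K) (hKint : (interior K).Nonempty)
    {e : Fin 3 → E3} (he : Orthonormal ℝ e)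
    {x' : E3} (hx' : x' ∈ projPlane e '' K) {d : ℝ}
    (hdist : d ≤ Metric.infDist x' (intrinsicFrontier ℝ (projPlane e '' K)))
    {p : E3} (hp : projPlane e p = p) (hpd : dist p x' < d) :
    p ∈ projPlane e '' K := by
  set K' := projPlane e '' K with hK'def
  have hx'fix : projPlane e x' = x' := by
    obtain ⟨z, _, rfl⟩ := hx'
    exact projPlane_idem he z
  by_contra hpK
  have hK'closed : IsClosed K' := (hKcomp.image projPlane_continuous).isClosed
  -- interior point and plane ball inside K'
  obtain ⟨a, ha⟩ := hKint
  obtain ⟨ε, hε, haball⟩ := Metric.isOpen_iff.1 isOpen_interior a ha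
  set a' := projPlane e a with ha'def
  have ha'fix : projPlane e a' = a' := projPlane_idem he a
  have hplane_in_K' : ∀ y : E3, projPlane e y = y → dist y a' < ε → y ∈ K' := by
    intro y hy hyd
    refine ⟨y + ⟪a, e 0⟫ • e 0, interior_subset (haball ?_), ?_⟩
    · rw [Metric.mem_ball, dist_eq_norm]
      have hxa : y + ⟪a, e 0⟫ • e 0 - a = y - a' := by
        nth_rewrite 2 [decomp he a]
        abel
      rw [hxa, ← dist_eq_norm]
      exact hyd
    · rw [projPlane_add, projPlane_smul, projPlane_e0 he, smul_zero, add_zero, hy]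
  -- the affine span of K' contains all plane points
  have ha'K' : a' ∈ K' := hplane_in_K' a' ha'fix (by simp [hε])
  have hb1 : a' + (ε/2) • e 1 ∈ K' := by
    apply hplane_in_K'
    · rw [projPlane_add, projPlane_smul, projPlane_e1 he, ha'fix]
    · rw [dist_eq_norm, add_sub_cancel_left, norm_smul, (he.1 1)]
      simp only [mul_one, Real.norm_eq_abs]
      rw [abs_of_pos (by linarith)]
      linarith
  have hb2 : a' + (ε/2) • e 2 ∈ K' := by
    apply hplane_in_K'
    · rw [projPlane_add, projPlane_smul, projPlane_e2 he, ha'fix]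
    · rw [dist_eq_norm, add_sub_cancel_left, norm_smul, (he.1 2)]
      simp only [mul_one, Real.norm_eq_abs]
      rw [abs_of_pos (by linarith)]
      linarith
  have hspan : ∀ y : E3, projPlane e y = y → y ∈ affineSpan ℝ K' := by
    intro y hy
    have m0 : a' ∈ affineSpan ℝ K' := subset_affineSpan ℝ K' ha'K'
    have m1 : a' + (ε/2) • e 1 ∈ affineSpan ℝ K' := subset_affineSpan ℝ K' hb1
    have m2 : a' + (ε/2) • e 2 ∈ affineSpan ℝ K' := subset_affineSpan ℝ K' hb2
    have step1 := AffineSubspace.smul_vsub_vadd_mem (affineSpan ℝ K')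
      (2/ε * ⟪y - a', e 2⟫) m2 m0 m0
    have step2 := AffineSubspace.smul_vsub_vadd_mem (affineSpan ℝ K')
      (2/ε * ⟪y - a', e 1⟫) m1 m0 step1
    have key : (2/ε * ⟪y - a', e 1⟫) • (a' + (ε/2) • e 1 -ᵥ a') +ᵥ
        ((2/ε * ⟪y - a', e 2⟫) • (a' + (ε/2) • e 2 -ᵥ a') +ᵥ a') = y := by
      simp only [vsub_eq_sub, vadd_eq_add, add_sub_cancel_left, smul_smul]
      have c1 : 2/ε * ⟪y - a', e 1⟫ * (ε/2) = ⟪y - a', e 1⟫ := by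
        field_simp
      have c2 : 2/ε * ⟪y - a', e 2⟫ * (ε/2) = ⟪y - a', e 2⟫ := by
        field_simp
      rw [c1, c2]
      have hfix : ⟪y - a', e 1⟫ • e 1 + ⟪y - a', e 2⟫ • e 2 = y - a' := by
        have : projPlane e (y - a') = y - a' := by
          rw [projPlane_sub, hy, ha'fix]
        exact this
      rw [← add_assoc, hfix]
      abel
    rw [key] at step2
    exact step2
  -- segment function
  set g : ℝ → E3 := fun t => x' + t • (p - x') with hgdef
  have hgcont : Continuous g := continuous_const.add (continuous_id.smul continuous_const)
  have hgspan : ∀ t, g t ∈ affineSpan ℝ K' := by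
    intro t
    have := AffineSubspace.smul_vsub_vadd_mem (affineSpan ℝ K') t
      (hspan p hp) (hspan x' hx'fix) (hspan x' hx'fix)
    simpa [hgdef, vsub_eq_sub, vadd_eq_add, add_comm] using this
  set T := Icc (0:ℝ) 1 ∩ g ⁻¹' K' with hTdef
  have hT0 : (0:ℝ) ∈ T := by
    constructor
    · exact ⟨le_refl 0, zero_le_one⟩
    · show g 0 ∈ K'
      simp only [hgdef, zero_smul, add_zero]
      exact hx'
  have hTbdd : BddAbove T := ⟨1, fun t ht => ht.1.2⟩
  have hTclosed : IsClosed T := isClosed_Icc.inter (hK'closed.preimage hgcont)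
  set t₀ := sSup T with ht₀def
  have ht₀T : t₀ ∈ T := hTclosed.csSup_mem ⟨0, hT0⟩ hTbdd
  have ht₀0 : 0 ≤ t₀ := ht₀T.1.1
  have ht₀lt1 : t₀ < 1 := by
    rcases lt_or_eq_of_le ht₀T.1.2 with h | h
    · exact h
    · exfalso
      have : g 1 ∈ K' := by rw [← h]; exact ht₀T.2
      simp only [hgdef, one_smul, add_sub_cancel] at this
      exact hpK this
  -- approaching sequence from outside
  set u : ℕ → ℝ := fun n => t₀ + (1 - t₀)/(n+2) with hudef
  have hu_gt : ∀ n : ℕ, t₀ < u n := by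
    intro n
    have : (0:ℝ) < (1 - t₀)/(n+2) := by
      apply div_pos (by linarith)
      positivity
    simp only [hudef]; linarith
  have hu_le1 : ∀ n : ℕ, u n ≤ 1 := by
    intro n
    have h2 : (1 - t₀)/((n:ℝ)+2) ≤ (1 - t₀) := by
      apply div_le_self (by linarith)
      have : (0:ℝ) ≤ (n:ℝ) := Nat.cast_nonneg n
      linarith
    simp only [hudef]; linarith
  have hu_notin : ∀ n : ℕ, g (u n) ∉ K' := by
    intro n hmem
    have hTmem : u n ∈ T := ⟨⟨by linarith [hu_gt n], hu_le1 n⟩, hmem⟩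
    have := le_csSup hTbdd hTmem
    linarith [hu_gt n]
  have hu_tend : Tendsto u atTop (𝓝 t₀) := by
    have h2 : Tendsto (fun n : ℕ => (n:ℝ) + 2) atTop atTop :=
      tendsto_atTop_add_const_right _ 2 tendsto_natCast_atTop_atTop
    have h3 := h2.inv_tendsto_atTop
    have h4 := h3.const_mul (1 - t₀)
    have h5 : Tendsto (fun n : ℕ => (1 - t₀)/((n:ℝ)+2)) atTop (𝓝 0) := by
      simpa [div_eq_mul_inv] using h4
    have := h5.const_add t₀
    simpa [hudef] using this
  have hgu_tend : Tendsto (fun n => g (u n)) atTop (𝓝 (g t₀)) :=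
    (hgcont.tendsto _).comp hu_tend
  -- frontier membership in the affine span
  set q : affineSpan ℝ K' := ⟨g t₀, hgspan t₀⟩ with hqdef
  have h1 : q ∈ closure ((Subtype.val) ⁻¹' K' : Set (affineSpan ℝ K')) :=
    subset_closure ht₀T.2
  have h2 : q ∈ closure (((Subtype.val) ⁻¹' K' : Set (affineSpan ℝ K'))ᶜ) := by
    apply mem_closure_of_tendsto
      (f := fun n : ℕ => (⟨g (u n), hgspan (u n)⟩ : affineSpan ℝ K')) (b := atTop)
    · rw [tendsto_subtype_rng]
      exact hgu_tend
    · filter_upwards with n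
      exact hu_notin n
  have hfront : q ∈ frontier ((Subtype.val) ⁻¹' K' : Set (affineSpan ℝ K')) := by
    rw [frontier_eq_closure_inter_closure]
    exact ⟨h1, h2⟩
  have hmem : g t₀ ∈ intrinsicFrontier ℝ K' := ⟨q, hfront, rfl⟩
  have hle : Metric.infDist x' (intrinsicFrontier ℝ K') ≤ dist x' (g t₀) :=
    Metric.infDist_le_dist_of_mem hmem
  have hlt : dist x' (g t₀) < d := by
    have : x' - g t₀ = (-t₀) • (p - x') := by
      simp only [hgdef]
      module
    rw [dist_eq_norm, this, norm_smul, Real.norm_eq_abs, abs_neg, abs_of_nonneg ht₀0]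
    have hn : ‖p - x'‖ < d := by rwa [dist_eq_norm] at hpd
    have hn0 : 0 ≤ ‖p - x'‖ := norm_nonneg _
    nlinarith
  linarith


set_option maxHeartbeats 2000000 in
lemma cap_measure {f : Fin 3 → E3} (hf : Orthonormal ℝ f) {ρ : ℝ}
    (hρ0 : 0 ≤ ρ) (hρ : ρ^2 ≤ 2/3) :
    μH[2] {ν : E3 | ‖ν‖ = 1 ∧ ⟪ν, f 1⟫^2 + ⟪ν, f 2⟫^2 ≤ ρ^2 ∧ 0 ≤ ⟪ν, f 0⟫}
      ≤ ENNReal.ofReal (144 * ρ^2) := by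
  have hρ1 : ρ ≤ 1 := by nlinarith
  set h : (Fin 2 → ℝ) → E3 :=
    fun p => p 0 • f 1 + p 1 • f 2 + Real.sqrt (1 - (p 0)^2 - (p 1)^2) • f 0 with hhdef
  set s : Set (Fin 2 → ℝ) := {p | (p 0)^2 + (p 1)^2 ≤ ρ^2} with hsdef
  -- inclusion
  have hincl : {ν : E3 | ‖ν‖ = 1 ∧ ⟪ν, f 1⟫^2 + ⟪ν, f 2⟫^2 ≤ ρ^2 ∧ 0 ≤ ⟪ν, f 0⟫}
      ⊆ h '' s := by
    rintro ν ⟨hν1, hνρ, hν0⟩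
    refine ⟨![⟪ν, f 1⟫, ⟪ν, f 2⟫], by simpa [hsdef] using hνρ, ?_⟩
    have hpar : ⟪ν, f 0⟫^2 + ⟪ν, f 1⟫^2 + ⟪ν, f 2⟫^2 = 1 := by
      have hx := inner_expand hf ν ν
      rw [real_inner_self_eq_norm_mul_norm, hν1,
        real_inner_comm ν (f 0), real_inner_comm ν (f 1), real_inner_comm ν (f 2)] at hx
      linear_combination -hx
    have hsq : 1 - ⟪ν, f 1⟫^2 - ⟪ν, f 2⟫^2 = ⟪ν, f 0⟫^2 := by linarith
    simp only [hhdef, Matrix.cons_val_zero, Matrix.cons_val_one, Matrix.head_cons]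
    rw [hsq, Real.sqrt_sq hν0]
    have hv := vec_expand hf ν
    rw [real_inner_comm ν (f 0), real_inner_comm ν (f 1), real_inner_comm ν (f 2)] at hv
    conv_rhs => rw [hv]
    abel
  -- Lipschitz bound
  have hlip : LipschitzOnWith 6 h s := by
    apply LipschitzOnWith.of_dist_le_mul
    intro p hp q hq
    set D := dist p q with hDdef
    have hD0 : 0 ≤ D := dist_nonneg
    have hd0 : |p 0 - q 0| ≤ D := by
      have := dist_le_pi_dist p q 0
      rwa [Real.dist_eq] at this
    have hd1 : |p 1 - q 1| ≤ D := by
      have := dist_le_pi_dist p q 1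
      rwa [Real.dist_eq] at this
    have hp0 : |p 0| ≤ 1 := by
      rw [abs_le]
      constructor <;> nlinarith [hp.out]
    have hp1 : |p 1| ≤ 1 := by
      rw [abs_le]
      constructor <;> nlinarith [hp.out]
    have hq0 : |q 0| ≤ 1 := by
      rw [abs_le]
      constructor <;> nlinarith [hq.out]
    have hq1 : |q 1| ≤ 1 := by
      rw [abs_le]
      constructor <;> nlinarith [hq.out]
    set a := 1 - (p 0)^2 - (p 1)^2 with hadef
    set b := 1 - (q 0)^2 - (q 1)^2 with hbdef
    have ha3 : 1/3 ≤ a := by have := hp.out; simp only [hadef]; nlinarith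
    have hb3 : 1/3 ≤ b := by have := hq.out; simp only [hbdef]; nlinarith
    set sa := Real.sqrt a with hsadef
    set sb := Real.sqrt b with hsbdef
    have hsa2 : sa^2 = a := Real.sq_sqrt (by linarith)
    have hsb2 : sb^2 = b := Real.sq_sqrt (by linarith)
    have hsa0 : 0 ≤ sa := Real.sqrt_nonneg a
    have hsb0 : 0 ≤ sb := Real.sqrt_nonneg b
    have hsage : 1/2 ≤ sa := by
      rw [hsadef, show (1/2 : ℝ) = Real.sqrt (1/4) by
        rw [show (1/4 : ℝ) = (1/2)^2 by norm_num, Real.sqrt_sq (by norm_num)]]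
      exact Real.sqrt_le_sqrt (by linarith)
    have hsbge : 1/2 ≤ sb := by
      rw [hsbdef, show (1/2 : ℝ) = Real.sqrt (1/4) by
        rw [show (1/4 : ℝ) = (1/2)^2 by norm_num, Real.sqrt_sq (by norm_num)]]
      exact Real.sqrt_le_sqrt (by linarith)
    have habs : |sa - sb| ≤ |a - b| := by
      have h1 : |sa - sb| * 1 ≤ |sa - sb| * (sa + sb) := by
        apply mul_le_mul_of_nonneg_left (by linarith) (abs_nonneg _)
      have h2 : |sa - sb| * (sa + sb) = |a - b| := by
        rw [← abs_of_nonneg (by linarith : (0:ℝ) ≤ sa + sb), ← abs_mul]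
        congr 1
        linear_combination hsa2 - hsb2
      linarith [h1, h2.le, h2.ge]
    have hab : |a - b| ≤ 4 * D := by
      have h1 : a - b = (q 0 - p 0)*(q 0 + p 0) + (q 1 - p 1)*(q 1 + p 1) := by
        simp only [hadef, hbdef]; ring
      rw [h1]
      calc |(q 0 - p 0)*(q 0 + p 0) + (q 1 - p 1)*(q 1 + p 1)|
          ≤ |(q 0 - p 0)*(q 0 + p 0)| + |(q 1 - p 1)*(q 1 + p 1)| := abs_add_le _ _
        _ = |q 0 - p 0| * |q 0 + p 0| + |q 1 - p 1| * |q 1 + p 1| := by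
            rw [abs_mul, abs_mul]
        _ ≤ D * 2 + D * 2 := by
            have e0 : |q 0 - p 0| = |p 0 - q 0| := abs_sub_comm _ _
            have e1 : |q 1 - p 1| = |p 1 - q 1| := abs_sub_comm _ _
            have f0 : |q 0 + p 0| ≤ 2 := by
              calc |q 0 + p 0| ≤ |q 0| + |p 0| := abs_add_le _ _
                _ ≤ 2 := by linarith
            have f1 : |q 1 + p 1| ≤ 2 := by
              calc |q 1 + p 1| ≤ |q 1| + |p 1| := abs_add_le _ _
                _ ≤ 2 := by linarith
            rw [e0, e1]
            have := abs_nonneg (p 0 - q 0)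
            have := abs_nonneg (p 1 - q 1)
            nlinarith
        _ = 4 * D := by ring
    -- final norm bound
    have hdiff : h p - h q = (p 0 - q 0) • f 1 + (p 1 - q 1) • f 2 + (sa - sb) • f 0 := by
      simp only [hhdef, ← hadef, ← hbdef, ← hsadef, ← hsbdef, sub_smul]
      abel
    rw [dist_eq_norm, hdiff]
    calc ‖(p 0 - q 0) • f 1 + (p 1 - q 1) • f 2 + (sa - sb) • f 0‖
        ≤ ‖(p 0 - q 0) • f 1‖ + ‖(p 1 - q 1) • f 2‖ + ‖(sa - sb) • f 0‖ := norm_add₃_le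
      _ = |p 0 - q 0| + |p 1 - q 1| + |sa - sb| := by
          rw [norm_smul, norm_smul, norm_smul, hf.1 0, hf.1 1, hf.1 2]
          simp [Real.norm_eq_abs]
      _ ≤ D + D + 4 * D := by linarith
      _ ≤ 6 * D := by linarith
  -- measure computation
  have hsub : s ⊆ Metric.closedBall (0 : Fin 2 → ℝ) ρ := by
    intro p hp
    rw [Metric.mem_closedBall, dist_pi_le_iff hρ0]
    intro i
    have h0 : |p 0| ≤ ρ := abs_le.mpr ⟨by nlinarith [hp.out], by nlinarith [hp.out]⟩
    have h1 : |p 1| ≤ ρ := abs_le.mpr ⟨by nlinarith [hp.out], by nlinarith [hp.out]⟩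
    rw [Real.dist_eq, Pi.zero_apply, sub_zero]
    obtain ⟨i, hi⟩ := i
    interval_cases i
    · exact h0
    · exact h1
  have hμs : μH[(2:ℝ)] s ≤ ENNReal.ofReal (4 * ρ^2) := by
    have hpi : (μH[(2:ℝ)] : Measure (Fin 2 → ℝ)) = volume := by
      have := MeasureTheory.hausdorffMeasure_pi_real (ι := Fin 2)
      simpa using this
    rw [hpi]
    calc volume s ≤ volume (Metric.closedBall (0 : Fin 2 → ℝ) ρ) := measure_mono hsub
      _ = ENNReal.ofReal ((2*ρ)^Fintype.card (Fin 2)) := Real.volume_pi_closedBall 0 hρ0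
      _ = ENNReal.ofReal (4 * ρ^2) := by
          congr 1
          rw [Fintype.card_fin]
          ring
  calc μH[(2:ℝ)] {ν : E3 | ‖ν‖ = 1 ∧ ⟪ν, f 1⟫^2 + ⟪ν, f 2⟫^2 ≤ ρ^2 ∧ 0 ≤ ⟪ν, f 0⟫}
      ≤ μH[(2:ℝ)] (h '' s) := measure_mono hincl
    _ ≤ (6:ℝ≥0) ^ (2:ℝ) * μH[(2:ℝ)] s := hlip.hausdorffMeasure_image_le (by norm_num)
    _ ≤ (6:ℝ≥0) ^ (2:ℝ) * ENNReal.ofReal (4 * ρ^2) := mul_le_mul_right hμs _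
    _ = ENNReal.ofReal (144 * ρ^2) := by
        rw [show ((6:ℝ≥0) : ℝ≥0∞) ^ (2:ℝ) = 36 by
          rw [show (2:ℝ) = ((2:ℕ):ℝ) by norm_num, ENNReal.rpow_natCast]
          norm_num]
        rw [show (36 : ℝ≥0∞) = ENNReal.ofReal 36 by norm_num,
          ← ENNReal.ofReal_mul (by norm_num)]
        congr 1
        ring


set_option maxHeartbeats 1000000 in
lemma normal_bound {K Eset : Set E3} {c : E3} {e : Fin 3 → E3} {r : Fin 3 → ℝ} {d : ℝ}
    (hK : IsConvexBody K) (hr0 : 0 < r 0) (he : Orthonormal ℝ e)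
    (hEeq : Eset = {x : E3 | (∑ i, (⟪x - c, e i⟫ / r i) ^ 2) ≤ 1})
    (hKE : K ⊆ dilate c ((3:ℝ) ^ ((3:ℝ)/2)) Eset) (hd : 0 < d) {x ν : E3}
    (hx : x ∈ frontier K)
    (hdist : Metric.infDist (projPlane e x) (intrinsicFrontier ℝ (projPlane e '' K)) ≥ d)
    (hν : outerNormalAt K x ν) :
    ⟪ν, e 1⟫^2 + ⟪ν, e 2⟫^2 ≤ (4 * (3:ℝ)^((3:ℝ)/2) * r 0 / d)^2 := by
  set β := (3:ℝ)^((3:ℝ)/2) with hβdef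
  have hβ : 0 < β := Real.rpow_pos_of_pos (by norm_num) _
  have hwidth : ∀ z ∈ K, |⟪z - c, e 0⟫| ≤ β * r 0 := by
    intro z hz
    obtain ⟨y, hy, hzy⟩ := hKE hz
    have h1 : z - c = β • (y - c) := by
      rw [← hzy]; exact add_sub_cancel_left c _
    rw [h1, real_inner_smul_left, abs_mul, abs_of_pos hβ]
    rw [hEeq] at hy
    have hsum : (∑ i, (⟪y - c, e i⟫ / r i) ^ 2) ≤ 1 := hy
    rw [Fin.sum_univ_three] at hsum
    have h2 : (⟪y - c, e 0⟫ / r 0)^2 ≤ 1 := by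
      nlinarith [sq_nonneg (⟪y - c, e 1⟫ / r 1), sq_nonneg (⟪y - c, e 2⟫ / r 2)]
    have h3 : ⟪y - c, e 0⟫^2 ≤ (r 0)^2 := by
      rw [div_pow] at h2
      calc ⟪y - c, e 0⟫^2 = (⟪y - c, e 0⟫^2/(r 0)^2) * (r 0)^2 := by field_simp
        _ ≤ 1 * (r 0)^2 := mul_le_mul_of_nonneg_right h2 (sq_nonneg _)
        _ = (r 0)^2 := one_mul _
    have h4 : |⟪y - c, e 0⟫| ≤ r 0 := by
      rw [abs_le]; constructor <;> nlinarith
    exact mul_le_mul_of_nonneg_left h4 hβ.le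
  have hxK : x ∈ K := hK.2.1.isClosed.frontier_subset hx
  have htpos : 0 < 4 * β * r 0 / d := by positivity
  rcases eq_or_lt_of_le (by positivity : (0:ℝ) ≤ ⟪ν, e 1⟫^2 + ⟪ν, e 2⟫^2) with h0 | hpos
  · rw [← h0]; positivity
  · set s := Real.sqrt (⟪ν, e 1⟫^2 + ⟪ν, e 2⟫^2) with hsdef
    have hs2 : s^2 = ⟪ν, e 1⟫^2 + ⟪ν, e 2⟫^2 := Real.sq_sqrt (le_of_lt hpos)
    have hs : 0 < s := Real.sqrt_pos.mpr hpos
    set p := projPlane e x + ((d/2) * (s⁻¹ * ⟪ν, e 1⟫)) • e 1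
      + ((d/2) * (s⁻¹ * ⟪ν, e 2⟫)) • e 2 with hpdef
    have hpfix : projPlane e p = p := by
      rw [hpdef, projPlane_add, projPlane_add, projPlane_smul, projPlane_smul,
        projPlane_e1 he, projPlane_e2 he, projPlane_idem he]
    have hinv : s⁻¹ * (⟪ν, e 1⟫^2 + ⟪ν, e 2⟫^2) = s := by
      rw [← hs2, sq]
      field_simp
    have hpd : dist p (projPlane e x) < d := by
      have hdiff : p - projPlane e x = ((d/2) * (s⁻¹ * ⟪ν, e 1⟫)) • e 1
          + ((d/2) * (s⁻¹ * ⟪ν, e 2⟫)) • e 2 := by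
        rw [hpdef]; abel
      rw [dist_eq_norm, hdiff]
      have horth : ⟪((d/2) * (s⁻¹ * ⟪ν, e 1⟫)) • e 1, ((d/2) * (s⁻¹ * ⟪ν, e 2⟫)) • e 2⟫
          = (0:ℝ) := by
        rw [real_inner_smul_left, real_inner_smul_right, on_inner he]
        simp [(by decide : ¬(1:Fin 3) = 2)]
      have hn2 : ‖((d/2) * (s⁻¹ * ⟪ν, e 1⟫)) • e 1
          + ((d/2) * (s⁻¹ * ⟪ν, e 2⟫)) • e 2‖^2 = (d/2)^2 := by
        rw [norm_add_sq_real, horth]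
        rw [norm_smul, norm_smul, he.1 1, he.1 2]
        simp only [Real.norm_eq_abs, mul_one]
        have e1 : |(d/2) * (s⁻¹ * ⟪ν, e 1⟫)|^2 = ((d/2) * (s⁻¹ * ⟪ν, e 1⟫))^2 := sq_abs _
        have e2 : |(d/2) * (s⁻¹ * ⟪ν, e 2⟫)|^2 = ((d/2) * (s⁻¹ * ⟪ν, e 2⟫))^2 := sq_abs _
        rw [e1, e2]
        have hss : s⁻¹ * s⁻¹ * (⟪ν, e 1⟫^2 + ⟪ν, e 2⟫^2) = 1 := by
          rw [← hs2, sq]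
          field_simp
        nlinarith [hss]
      nlinarith [hn2, norm_nonneg (((d/2) * (s⁻¹ * ⟪ν, e 1⟫)) • e 1
        + ((d/2) * (s⁻¹ * ⟪ν, e 2⟫)) • e 2), hd]
    have hx'K' : projPlane e x ∈ projPlane e '' K := ⟨x, hxK, rfl⟩
    obtain ⟨z, hzK, hz⟩ := deep_ball hK.2.1 hK.2.2 he hx'K' hdist hpfix hpd
    have hkey := hν.2 z hzK
    have hz1 : ⟪z - x, e 1⟫ = (d/2) * (s⁻¹ * ⟪ν, e 1⟫) := by
      have hh := congrArg (fun w => ⟪w, e 1⟫) hz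
      rw [inner_projPlane_1 he] at hh
      have hp1 : ⟪p, e 1⟫ = ⟪x, e 1⟫ + (d/2) * (s⁻¹ * ⟪ν, e 1⟫) := by
        rw [hpdef]
        simp only [inner_add_left, real_inner_smul_left, on_inner he,
          (by decide : ¬(2:Fin 3) = 1), inner_projPlane_1 he]
        norm_num
      rw [inner_sub_left, hh, hp1]
      ring
    have hz2 : ⟪z - x, e 2⟫ = (d/2) * (s⁻¹ * ⟪ν, e 2⟫) := by
      have hh := congrArg (fun w => ⟪w, e 2⟫) hz
      rw [inner_projPlane_2 he] at hh
      have hp2 : ⟪p, e 2⟫ = ⟪x, e 2⟫ + (d/2) * (s⁻¹ * ⟪ν, e 2⟫) := by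
        rw [hpdef]
        simp only [inner_add_left, real_inner_smul_left, on_inner he,
          (by decide : ¬(1:Fin 3) = 2), inner_projPlane_2 he]
        norm_num
      rw [inner_sub_left, hh, hp2]
      ring
    have hplanar : ⟪ν, e 1⟫*⟪z - x, e 1⟫ + ⟪ν, e 2⟫*⟪z - x, e 2⟫ = (d/2)*s := by
      rw [hz1, hz2]
      linear_combination (d/2) * hinv
    have hexp := inner_expand he ν (z - x)
    rw [real_inner_comm (z - x) (e 0), real_inner_comm (z - x) (e 1),
      real_inner_comm (z - x) (e 2)] at hexp
    have hb0 : |⟪z - x, e 0⟫| ≤ 2*β*r 0 := by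
      have hzx : z - x = (z - c) - (x - c) := by abel
      rw [hzx, inner_sub_left, sub_eq_add_neg]
      calc |⟪z - c, e 0⟫ + -⟪x - c, e 0⟫| ≤ |⟪z - c, e 0⟫| + |-⟪x - c, e 0⟫| := abs_add_le _ _
        _ = |⟪z - c, e 0⟫| + |⟪x - c, e 0⟫| := by rw [abs_neg]
        _ ≤ β*r 0 + β*r 0 := add_le_add (hwidth z hzK) (hwidth x hxK)
        _ = 2*β*r 0 := by ring
    have hν0abs : |⟪ν, e 0⟫| ≤ 1 := by
      have hpar := inner_expand he ν ν
      rw [real_inner_self_eq_norm_mul_norm, hν.1,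
        real_inner_comm ν (e 0), real_inner_comm ν (e 1), real_inner_comm ν (e 2)] at hpar
      rw [abs_le]
      constructor <;> nlinarith [hpar, sq_nonneg ⟪ν, e 1⟫, sq_nonneg ⟪ν, e 2⟫,
        sq_nonneg (⟪ν, e 0⟫ - 1), sq_nonneg (⟪ν, e 0⟫ + 1)]
    have hmain : (d/2)*s ≤ 2*β*r 0 := by
      have h1 : ⟪ν, z - x⟫ = ⟪ν, e 0⟫*⟪z - x, e 0⟫ + (d/2)*s := by
        linear_combination hexp + hplanar
      have habs : |⟪ν, e 0⟫*⟪z - x, e 0⟫| ≤ 2*β*r 0 := by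
        rw [abs_mul]
        calc |⟪ν, e 0⟫| * |⟪z - x, e 0⟫| ≤ 1 * (2*β*r 0) :=
          mul_le_mul hν0abs hb0 (abs_nonneg _) zero_le_one
          _ = 2*β*r 0 := one_mul _
      have h2 : -(2*β*r 0) ≤ ⟪ν, e 0⟫*⟪z - x, e 0⟫ := by
        have := neg_abs_le (⟪ν, e 0⟫*⟪z - x, e 0⟫)
        linarith
      linarith [h1, h2, hkey]
    have hsle : s ≤ 4*β*r 0/d := by
      rw [le_div_iff₀ hd]
      nlinarith [hmain]
    calc ⟪ν, e 1⟫^2 + ⟪ν, e 2⟫^2 = s^2 := hs2.symm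
      _ ≤ (4*β*r 0/d)^2 := by nlinarith [hs.le, hsle, htpos]


lemma parseval3 {e : Fin 3 → E3} (he : Orthonormal ℝ e) {ν : E3} (h1 : ‖ν‖ = 1) :
    ⟪ν, e 0⟫^2 + ⟪ν, e 1⟫^2 + ⟪ν, e 2⟫^2 = 1 := by
  have hx := inner_expand he ν ν
  rw [real_inner_self_eq_norm_mul_norm, h1,
    real_inner_comm ν (e 0), real_inner_comm ν (e 1), real_inner_comm ν (e 2)] at hx
  linear_combination -hx

lemma cap_measure' {e : Fin 3 → E3} (he : Orthonormal ℝ e) (i j k : Fin 3)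
    (hij : i ≠ j) (hik : i ≠ k) (hjk : j ≠ k) (σ : ℝ) (hσ : σ = 1 ∨ σ = -1)
    {ρ : ℝ} (hρ0 : 0 ≤ ρ) (hρ : ρ^2 ≤ 2/3) :
    μH[2] {ν : E3 | ‖ν‖ = 1 ∧ ⟪ν, e j⟫^2 + ⟪ν, e k⟫^2 ≤ ρ^2 ∧ 0 ≤ σ * ⟪ν, e i⟫}
      ≤ ENNReal.ofReal (144 * ρ^2) := by
  have hf : Orthonormal ℝ ![σ • e i, e j, e k] := by
    rw [orthonormal_iff_ite]
    intro a b
    fin_cases a <;> fin_cases b <;> rcases hσ with rfl | rfl <;>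
      simp [Matrix.cons_val_zero, Matrix.cons_val_one, Matrix.head_cons,
        real_inner_smul_left, real_inner_smul_right, on_inner he,
        hij, hik, hjk, hij.symm, hik.symm, hjk.symm, Ne.symm hij, Ne.symm hik, Ne.symm hjk, he.1 i, he.1 j, he.1 k]
  have hset : {ν : E3 | ‖ν‖ = 1 ∧ ⟪ν, e j⟫^2 + ⟪ν, e k⟫^2 ≤ ρ^2 ∧ 0 ≤ σ * ⟪ν, e i⟫}
      = {ν : E3 | ‖ν‖ = 1 ∧ ⟪ν, (![σ • e i, e j, e k]) 1⟫^2
          + ⟪ν, (![σ • e i, e j, e k]) 2⟫^2 ≤ ρ^2 ∧ 0 ≤ ⟪ν, (![σ • e i, e j, e k]) 0⟫} := by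
    ext ν
    simp only [Set.mem_setOf_eq, Matrix.cons_val_zero, Matrix.cons_val_one, Matrix.head_cons, Matrix.cons_val_two, Matrix.tail_cons,
      real_inner_smul_right]
  rw [hset]
  exact cap_measure hf hρ0 hρ

set_option maxHeartbeats 2000000

theorem stmt9 :
    ∃ C > 0, ∀ (K E : Set E3) (c : E3) (e : Fin 3 → E3) (r : Fin 3 → ℝ) (d : ℝ),
      IsConvexBody K → IsEllipsoid E c e r → r 0 ≤ r 1 → r 1 ≤ r 2 →
      K ⊆ dilate c ((3:ℝ) ^ ((3:ℝ) / 2)) E → 0 < d →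
      μH[2] {ν : E3 | ν ∈ unitSphere ∧ ∃ x ∈ frontier K,
          Metric.infDist (projPlane e x) (intrinsicFrontier ℝ (projPlane e '' K)) ≥ d ∧
          outerNormalAt K x ν} ≤
        ENNReal.ofReal (C * (r 0 / d) ^ 2) := by
  refine ⟨2000000, by norm_num, ?_⟩
  intro K Eset c e r d hK hE _ _ hKE hd
  obtain ⟨hr, he, hEeq⟩ := hE
  set β := (3:ℝ)^((3:ℝ)/2) with hβdef
  have hβ : 0 < β := Real.rpow_pos_of_pos (by norm_num) _
  have hβsq : β^2 = 27 := by
    rw [hβdef, ← Real.rpow_natCast ((3:ℝ)^((3:ℝ)/2)) 2, ← Real.rpow_mul (by norm_num)]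
    norm_num
  set t := 4 * β * r 0 / d with htdef
  have ht : 0 < t := by
    have := hr 0
    positivity
  have ht2 : t^2 = 432 * (r 0 / d)^2 := by
    have h1 : t = (4*β) * (r 0 / d) := by rw [htdef, mul_div_assoc]
    rw [h1, mul_pow, show (4*β)^2 = 16*β^2 by ring, hβsq]
    ring
  have hFsub : ∀ ν ∈ {ν : E3 | ν ∈ unitSphere ∧ ∃ x ∈ frontier K,
      Metric.infDist (projPlane e x) (intrinsicFrontier ℝ (projPlane e '' K)) ≥ d ∧
      outerNormalAt K x ν},
      ‖ν‖ = 1 ∧ ⟪ν, e 1⟫^2 + ⟪ν, e 2⟫^2 ≤ t^2 := by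
    rintro ν ⟨hν1, x, hx, hxd, hν⟩
    have hn : ‖ν‖ = 1 := by
      rwa [unitSphere, mem_sphere_zero_iff_norm] at hν1
    exact ⟨hn, normal_bound hK (hr 0) he hEeq hKE hd hx hxd hν⟩
  rcases le_or_gt t (1/2) with hts | htl
  · -- small t : two caps around ±e 0
    have hρ23 : t^2 ≤ 2/3 := by nlinarith
    have hsub : {ν : E3 | ν ∈ unitSphere ∧ ∃ x ∈ frontier K,
        Metric.infDist (projPlane e x) (intrinsicFrontier ℝ (projPlane e '' K)) ≥ d ∧
        outerNormalAt K x ν} ⊆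
        {ν : E3 | ‖ν‖ = 1 ∧ ⟪ν, e 1⟫^2 + ⟪ν, e 2⟫^2 ≤ t^2 ∧ 0 ≤ (1:ℝ) * ⟪ν, e 0⟫}
        ∪ {ν : E3 | ‖ν‖ = 1 ∧ ⟪ν, e 1⟫^2 + ⟪ν, e 2⟫^2 ≤ t^2 ∧ 0 ≤ (-1:ℝ) * ⟪ν, e 0⟫} := by
      intro ν hν
      obtain ⟨h1, h2⟩ := hFsub ν hν
      rcases le_total 0 ⟪ν, e 0⟫ with h | h
      · left; exact ⟨h1, h2, by linarith⟩
      · right; exact ⟨h1, h2, by linarith⟩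
    have hb1 := cap_measure' he 0 1 2 (by decide) (by decide) (by decide) 1
      (Or.inl rfl) ht.le hρ23
    have hb2 := cap_measure' he 0 1 2 (by decide) (by decide) (by decide) (-1)
      (Or.inr rfl) ht.le hρ23
    calc μH[2] {ν : E3 | ν ∈ unitSphere ∧ ∃ x ∈ frontier K,
          Metric.infDist (projPlane e x) (intrinsicFrontier ℝ (projPlane e '' K)) ≥ d ∧
          outerNormalAt K x ν}
        ≤ μH[2] ({ν : E3 | ‖ν‖ = 1 ∧ ⟪ν, e 1⟫^2 + ⟪ν, e 2⟫^2 ≤ t^2 ∧ 0 ≤ (1:ℝ) * ⟪ν, e 0⟫}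
          ∪ {ν : E3 | ‖ν‖ = 1 ∧ ⟪ν, e 1⟫^2 + ⟪ν, e 2⟫^2 ≤ t^2 ∧ 0 ≤ (-1:ℝ) * ⟪ν, e 0⟫}) :=
          measure_mono hsub
      _ ≤ μH[2] {ν : E3 | ‖ν‖ = 1 ∧ ⟪ν, e 1⟫^2 + ⟪ν, e 2⟫^2 ≤ t^2 ∧ 0 ≤ (1:ℝ) * ⟪ν, e 0⟫}
          + μH[2] {ν : E3 | ‖ν‖ = 1 ∧ ⟪ν, e 1⟫^2 + ⟪ν, e 2⟫^2 ≤ t^2 ∧ 0 ≤ (-1:ℝ) * ⟪ν, e 0⟫} :=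
          measure_union_le _ _
      _ ≤ ENNReal.ofReal (144 * t^2) + ENNReal.ofReal (144 * t^2) := add_le_add hb1 hb2
      _ = ENNReal.ofReal (288 * t^2) := by
          rw [← ENNReal.ofReal_add (by positivity) (by positivity)]
          congr 1
          ring
      _ ≤ ENNReal.ofReal (2000000 * (r 0 / d) ^ 2) := by
          apply ENNReal.ofReal_le_ofReal
          nlinarith [ht2, sq_nonneg (r 0 / d)]
  · -- large t : six caps
    set ρ : ℝ := Real.sqrt (2/3) with hρdef
    have hρ0 : 0 ≤ ρ := Real.sqrt_nonneg _
    have hρsq : ρ^2 = 2/3 := Real.sq_sqrt (by norm_num)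
    have hcap : ∀ (i j k : Fin 3) (σ : ℝ), i ≠ j → i ≠ k → j ≠ k → (σ = 1 ∨ σ = -1) →
        μH[2] {ν : E3 | ‖ν‖ = 1 ∧ ⟪ν, e j⟫^2 + ⟪ν, e k⟫^2 ≤ ρ^2 ∧ 0 ≤ σ * ⟪ν, e i⟫}
          ≤ ENNReal.ofReal 96 := by
      intro i j k σ hij hik hjk hσ
      have := cap_measure' he i j k hij hik hjk σ hσ hρ0 (le_of_eq hρsq)
      calc μH[2] {ν : E3 | ‖ν‖ = 1 ∧ ⟪ν, e j⟫^2 + ⟪ν, e k⟫^2 ≤ ρ^2 ∧ 0 ≤ σ * ⟪ν, e i⟫}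
          ≤ ENNReal.ofReal (144 * ρ^2) := this
        _ = ENNReal.ofReal 96 := by rw [hρsq]; norm_num
    set A : Fin 3 → ℝ → Set E3 := fun i σ =>
      {ν : E3 | ‖ν‖ = 1 ∧ ⟪ν, e (if i = 0 then 1 else 0)⟫^2
        + ⟪ν, e (if i = 2 then 1 else 2)⟫^2 ≤ ρ^2 ∧ 0 ≤ σ * ⟪ν, e i⟫} with hAdef
    have hsub : {ν : E3 | ν ∈ unitSphere ∧ ∃ x ∈ frontier K,
        Metric.infDist (projPlane e x) (intrinsicFrontier ℝ (projPlane e '' K)) ≥ d ∧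
        outerNormalAt K x ν} ⊆
        (((((A 0 1 ∪ A 0 (-1)) ∪ A 1 1) ∪ A 1 (-1)) ∪ A 2 1) ∪ A 2 (-1)) := by
      intro ν hν
      obtain ⟨h1, _⟩ := hFsub ν hν
      have hpar := parseval3 he h1
      have hbig : 1/3 ≤ ⟪ν, e 0⟫^2 ∨ 1/3 ≤ ⟪ν, e 1⟫^2 ∨ 1/3 ≤ ⟪ν, e 2⟫^2 := by
        by_contra hcon
        push_neg at hcon
        obtain ⟨c1, c2, c3⟩ := hcon
        linarith
      rcases hbig with hb | hb | hb
      · have hsum : ⟪ν, e 1⟫^2 + ⟪ν, e 2⟫^2 ≤ ρ^2 := by rw [hρsq]; linarith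
        rcases le_total 0 ⟪ν, e 0⟫ with h | h
        · left; left; left; left; left
          exact ⟨h1, hsum, by linarith⟩
        · left; left; left; left; right
          exact ⟨h1, hsum, by linarith⟩
      · have hsum : ⟪ν, e 0⟫^2 + ⟪ν, e 2⟫^2 ≤ ρ^2 := by rw [hρsq]; linarith
        rcases le_total 0 ⟪ν, e 1⟫ with h | h
        · left; left; left; right
          exact ⟨h1, hsum, by linarith⟩
        · left; left; right
          exact ⟨h1, hsum, by linarith⟩
      · have hsum : ⟪ν, e 0⟫^2 + ⟪ν, e 1⟫^2 ≤ ρ^2 := by rw [hρsq]; linarith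
        rcases le_total 0 ⟪ν, e 2⟫ with h | h
        · left; right
          exact ⟨h1, hsum, by linarith⟩
        · right
          exact ⟨h1, hsum, by linarith⟩
    have hA01 : μH[2] (A 0 1) ≤ ENNReal.ofReal 96 := by
      simpa [hAdef] using hcap 0 1 2 1 (by decide) (by decide) (by decide) (Or.inl rfl)
    have hA0m : μH[2] (A 0 (-1)) ≤ ENNReal.ofReal 96 := by
      simpa [hAdef] using hcap 0 1 2 (-1) (by decide) (by decide) (by decide) (Or.inr rfl)
    have hA11 : μH[2] (A 1 1) ≤ ENNReal.ofReal 96 := by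
      simpa [hAdef] using hcap 1 0 2 1 (by decide) (by decide) (by decide) (Or.inl rfl)
    have hA1m : μH[2] (A 1 (-1)) ≤ ENNReal.ofReal 96 := by
      simpa [hAdef] using hcap 1 0 2 (-1) (by decide) (by decide) (by decide) (Or.inr rfl)
    have hA21 : μH[2] (A 2 1) ≤ ENNReal.ofReal 96 := by
      simpa [hAdef] using hcap 2 0 1 1 (by decide) (by decide) (by decide) (Or.inl rfl)
    have hA2m : μH[2] (A 2 (-1)) ≤ ENNReal.ofReal 96 := by
      simpa [hAdef] using hcap 2 0 1 (-1) (by decide) (by decide) (by decide) (Or.inr rfl)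
    have hunion : μH[2] (((((A 0 1 ∪ A 0 (-1)) ∪ A 1 1) ∪ A 1 (-1)) ∪ A 2 1) ∪ A 2 (-1))
        ≤ ENNReal.ofReal 96 + ENNReal.ofReal 96 + ENNReal.ofReal 96 + ENNReal.ofReal 96
          + ENNReal.ofReal 96 + ENNReal.ofReal 96 := by
      calc μH[2] (((((A 0 1 ∪ A 0 (-1)) ∪ A 1 1) ∪ A 1 (-1)) ∪ A 2 1) ∪ A 2 (-1))
          ≤ μH[2] ((((A 0 1 ∪ A 0 (-1)) ∪ A 1 1) ∪ A 1 (-1)) ∪ A 2 1) + μH[2] (A 2 (-1)) :=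
            measure_union_le _ _
        _ ≤ (μH[2] ((((A 0 1 ∪ A 0 (-1)) ∪ A 1 1) ∪ A 1 (-1))) + μH[2] (A 2 1)) + μH[2] (A 2 (-1)) :=
            add_le_add_left (measure_union_le _ _) _
        _ ≤ ((μH[2] (((A 0 1 ∪ A 0 (-1)) ∪ A 1 1)) + μH[2] (A 1 (-1))) + μH[2] (A 2 1)) + μH[2] (A 2 (-1)) := by
            gcongr
            exact measure_union_le _ _
        _ ≤ (((μH[2] ((A 0 1 ∪ A 0 (-1))) + μH[2] (A 1 1)) + μH[2] (A 1 (-1))) + μH[2] (A 2 1)) + μH[2] (A 2 (-1)) := by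
            gcongr
            exact measure_union_le _ _
        _ ≤ ((((μH[2] (A 0 1) + μH[2] (A 0 (-1))) + μH[2] (A 1 1)) + μH[2] (A 1 (-1))) + μH[2] (A 2 1)) + μH[2] (A 2 (-1)) := by
            gcongr
            exact measure_union_le _ _
        _ ≤ ENNReal.ofReal 96 + ENNReal.ofReal 96 + ENNReal.ofReal 96 + ENNReal.ofReal 96
            + ENNReal.ofReal 96 + ENNReal.ofReal 96 := by
            gcongr
    calc μH[2] {ν : E3 | ν ∈ unitSphere ∧ ∃ x ∈ frontier K,
          Metric.infDist (projPlane e x) (intrinsicFrontier ℝ (projPlane e '' K)) ≥ d ∧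
          outerNormalAt K x ν}
        ≤ μH[2] (((((A 0 1 ∪ A 0 (-1)) ∪ A 1 1) ∪ A 1 (-1)) ∪ A 2 1) ∪ A 2 (-1)) :=
          measure_mono hsub
      _ ≤ ENNReal.ofReal 96 + ENNReal.ofReal 96 + ENNReal.ofReal 96 + ENNReal.ofReal 96
          + ENNReal.ofReal 96 + ENNReal.ofReal 96 := hunion
      _ = ENNReal.ofReal 576 := by
          rw [← ENNReal.ofReal_add (by norm_num) (by norm_num),
            ← ENNReal.ofReal_add (by norm_num) (by norm_num),
            ← ENNReal.ofReal_add (by norm_num) (by norm_num),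
            ← ENNReal.ofReal_add (by norm_num) (by norm_num),
            ← ENNReal.ofReal_add (by norm_num) (by norm_num)]
          norm_num
      _ ≤ ENNReal.ofReal (2000000 * (r 0 / d) ^ 2) := by
          apply ENNReal.ofReal_le_ofReal
          nlinarith [ht2, htl, ht]
end
end

section
/- For every n ≥ 1 and C ≥ 1 there exists C₁ ≥ 1 depending only on n and C such that: if A and B are symmetric positive definite n×n real matrices with (1/C)·I ≤ A ≤ C·I and (1/C)·I ≤ B ≤ C·I (in the sense of quadratic forms), then the matrix D := ∫₀¹ cof((1−t)B + tA) dt is symmetric and satisfies (1/C₁)·I ≤ D ≤ C₁·I. -/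
open scoped BigOperators RealInnerProductSpace

noncomputable section

/-- The cofactor matrix of `M`, whose `(i,j)` entry is `∂(det)/∂M_{ij}`; it satisfies
`(cof M)^T * M = det M • 1`, i.e. `cof M = (adjugate M)^T`. -/
def cof {n : ℕ} (M : Matrix (Fin n) (Fin n) ℝ) : Matrix (Fin n) (Fin n) ℝ :=
  (Matrix.adjugate M).transpose

/-- `P ≤ Q` for symmetric matrices, in the sense of quadratic forms. -/
def MatLE {n : ℕ} (P Q : Matrix (Fin n) (Fin n) ℝ) : Prop := (Q - P).PosSemidef

namespace Stmt13Aux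

open Matrix

variable {n : ℕ}

lemma qf_psd {Q : Matrix (Fin n) (Fin n) ℝ} (h : Q.PosSemidef) (x : Fin n → ℝ) :
    0 ≤ x ⬝ᵥ Q *ᵥ x := by simpa using h.dotProduct_mulVec_nonneg x

lemma psd_of_qf {Q : Matrix (Fin n) (Fin n) ℝ} (hsym : Q.IsSymm)
    (h : ∀ x, 0 ≤ x ⬝ᵥ Q *ᵥ x) : Q.PosSemidef := by
  refine Matrix.PosSemidef.of_dotProduct_mulVec_nonneg ?_ fun x => by simpa using h x
  rw [Matrix.IsHermitian, conjTranspose_eq_transpose_of_trivial]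
  exact hsym

lemma qf_sub (P Q : Matrix (Fin n) (Fin n) ℝ) (x : Fin n → ℝ) :
    x ⬝ᵥ (P - Q) *ᵥ x = x ⬝ᵥ P *ᵥ x - x ⬝ᵥ Q *ᵥ x := by
  simp [Matrix.sub_mulVec, dotProduct_sub]

lemma qf_add (P Q : Matrix (Fin n) (Fin n) ℝ) (x : Fin n → ℝ) :
    x ⬝ᵥ (P + Q) *ᵥ x = x ⬝ᵥ P *ᵥ x + x ⬝ᵥ Q *ᵥ x := by
  simp [Matrix.add_mulVec, dotProduct_add]

lemma qf_smul (c : ℝ) (P : Matrix (Fin n) (Fin n) ℝ) (x : Fin n → ℝ) :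
    x ⬝ᵥ (c • P) *ᵥ x = c * (x ⬝ᵥ P *ᵥ x) := by
  simp [Matrix.smul_mulVec, dotProduct_smul, smul_eq_mul]

lemma qf_one (x : Fin n → ℝ) :
    x ⬝ᵥ (1 : Matrix (Fin n) (Fin n) ℝ) *ᵥ x = x ⬝ᵥ x := by
  simp [Matrix.one_mulVec]

lemma cof_isSymm (M : Matrix (Fin n) (Fin n) ℝ) (hsym : M.IsSymm) : (cof M).IsSymm := by
  show (cof M)ᵀ = cof M
  rw [cof, Matrix.transpose_transpose, Matrix.adjugate_transpose, hsym]

/-- Quadratic form bounds for a unitarily conjugated diagonal matrix. -/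
lemma qf_conj_diag (U : Matrix (Fin n) (Fin n) ℝ) (hU : U ∈ Matrix.unitaryGroup (Fin n) ℝ)
    (d : Fin n → ℝ) {a b : ℝ} (ha : ∀ i, a ≤ d i) (hb : ∀ i, d i ≤ b) (x : Fin n → ℝ) :
    a * (x ⬝ᵥ x) ≤ x ⬝ᵥ (U * Matrix.diagonal d * star U) *ᵥ x ∧
      x ⬝ᵥ (U * Matrix.diagonal d * star U) *ᵥ x ≤ b * (x ⬝ᵥ x) := by
  have hUU : U * star U = 1 := (Matrix.mem_unitaryGroup_iff).mp hU
  have hconj : ∀ e : Fin n → ℝ, (∀ i, 0 ≤ e i) →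
      0 ≤ x ⬝ᵥ (U * Matrix.diagonal e * star U) *ᵥ x := by
    intro e he
    have hd : (Matrix.diagonal e).PosSemidef := Matrix.PosSemidef.diagonal he
    have := hd.mul_mul_conjTranspose_same U
    rw [← Matrix.star_eq_conjTranspose] at this
    exact qf_psd this x
  have key : ∀ c : ℝ, U * Matrix.diagonal (fun i => c - d i) * star U
      = c • (1 : Matrix (Fin n) (Fin n) ℝ) - U * Matrix.diagonal d * star U := by
    intro c
    have h1 : Matrix.diagonal (fun i => c - d i)
        = Matrix.diagonal (fun _ => c) - Matrix.diagonal d := by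
      rw [← Matrix.diagonal_sub]
    have h2 : Matrix.diagonal (fun _ : Fin n => c) = c • (1 : Matrix (Fin n) (Fin n) ℝ) := by
      rw [Matrix.smul_one_eq_diagonal]
    rw [h1, h2, Matrix.mul_sub, Matrix.sub_mul, Matrix.mul_smul, Matrix.mul_one,
      Matrix.smul_mul, hUU]
  constructor
  · have := hconj (fun i => d i - a) (fun i => by simpa using sub_nonneg.mpr (ha i))
    have e : U * Matrix.diagonal (fun i => d i - a) * star U
        = U * Matrix.diagonal d * star U - a • (1 : Matrix (Fin n) (Fin n) ℝ) := by
      have h1 : Matrix.diagonal (fun i => d i - a)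
          = Matrix.diagonal d - Matrix.diagonal (fun _ => a) := by
        rw [← Matrix.diagonal_sub]
      have h2 : Matrix.diagonal (fun _ : Fin n => a) = a • (1 : Matrix (Fin n) (Fin n) ℝ) := by
        rw [Matrix.smul_one_eq_diagonal]
      rw [h1, h2, Matrix.mul_sub, Matrix.sub_mul, Matrix.mul_smul, Matrix.mul_one,
        Matrix.smul_mul, hUU]
    rw [e, qf_sub, qf_smul, qf_one] at this
    linarith
  · have := hconj (fun i => b - d i) (fun i => by simpa using sub_nonneg.mpr (hb i))
    rw [key b, qf_sub, qf_smul, qf_one] at this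
    linarith

/-- The main pointwise bound: quadratic form bounds on `M` give bounds on `cof M`. -/
lemma cof_qf_bounds {C : ℝ} (hC : 1 ≤ C) (M : Matrix (Fin n) (Fin n) ℝ) (hsym : M.IsSymm)
    (h1 : ∀ x : Fin n → ℝ, C⁻¹ * (x ⬝ᵥ x) ≤ x ⬝ᵥ M *ᵥ x)
    (h2 : ∀ x : Fin n → ℝ, x ⬝ᵥ M *ᵥ x ≤ C * (x ⬝ᵥ x)) (x : Fin n → ℝ) :
    (C ^ (n + 1))⁻¹ * (x ⬝ᵥ x) ≤ x ⬝ᵥ cof M *ᵥ x ∧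
      x ⬝ᵥ cof M *ᵥ x ≤ C ^ (n + 1) * (x ⬝ᵥ x) := by
  have hC0 : (0:ℝ) < C := lt_of_lt_of_le one_pos hC
  have hherm : M.IsHermitian := by
    rw [Matrix.IsHermitian, conjTranspose_eq_transpose_of_trivial]; exact hsym
  set μ := hherm.eigenvalues with hμ
  set v : Fin n → (Fin n → ℝ) := fun i => ⇑(hherm.eigenvectorBasis i) with hv
  have hnorm : ∀ i, (v i) ⬝ᵥ (v i) = 1 := by
    intro i
    have h1 : ‖hherm.eigenvectorBasis i‖ = 1 := hherm.eigenvectorBasis.orthonormal.1 i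
    have h2 : (inner ℝ (hherm.eigenvectorBasis i) (hherm.eigenvectorBasis i) : ℝ) = 1 := by
      rw [real_inner_self_eq_norm_mul_norm, h1, mul_one]
    rw [EuclideanSpace.inner_eq_star_dotProduct] at h2
    simpa using h2
  have heig : ∀ i, (v i) ⬝ᵥ M *ᵥ (v i) = μ i := by
    intro i
    rw [hv]
    simp only [hherm.mulVec_eigenvectorBasis, dotProduct_smul, smul_eq_mul]
    have := hnorm i
    rw [hv] at this
    rw [this, mul_one]
  have hlo : ∀ i, C⁻¹ ≤ μ i := by
    intro i
    have := h1 (v i)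
    rwa [hnorm i, heig i, mul_one] at this
  have hhi : ∀ i, μ i ≤ C := by
    intro i
    have := h2 (v i)
    rwa [hnorm i, heig i, mul_one] at this
  have hμpos : ∀ i, 0 < μ i := fun i => lt_of_lt_of_le (inv_pos.mpr hC0) (hlo i)
  have hdet : M.det = ∏ i, μ i := by
    have := hherm.det_eq_prod_eigenvalues
    simpa using this
  have hdetpos : 0 < M.det := by
    rw [hdet]; exact Finset.prod_pos fun i _ => hμpos i
  have hdlo : (C ^ n)⁻¹ ≤ M.det := by
    rw [hdet]
    calc (C ^ n)⁻¹ = ∏ _i : Fin n, C⁻¹ := by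
          rw [Finset.prod_const, Finset.card_univ, Fintype.card_fin, inv_pow]
      _ ≤ ∏ i, μ i := Finset.prod_le_prod (fun i _ => (inv_pos.mpr hC0).le)
          (fun i _ => hlo i)
  have hdhi : M.det ≤ C ^ n := by
    rw [hdet]
    calc ∏ i, μ i ≤ ∏ _i : Fin n, C := Finset.prod_le_prod (fun i _ => (hμpos i).le)
          (fun i _ => hhi i)
      _ = C ^ n := by rw [Finset.prod_const, Finset.card_univ, Fintype.card_fin]
  set U : Matrix (Fin n) (Fin n) ℝ := (hherm.eigenvectorUnitary : Matrix (Fin n) (Fin n) ℝ)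
    with hUdef
  have hUmem : U ∈ Matrix.unitaryGroup (Fin n) ℝ := hherm.eigenvectorUnitary.2
  have hUU : U * star U = 1 := (Matrix.mem_unitaryGroup_iff).mp hUmem
  have hUU' : star U * U = 1 := (Matrix.mem_unitaryGroup_iff').mp hUmem
  have hspec : M = U * Matrix.diagonal μ * star U := by
    have := hherm.spectral_theorem
    rwa [RCLike.ofReal_real_eq_id, Function.id_comp] at this
  have hMinv : M⁻¹ = U * Matrix.diagonal (fun i => (μ i)⁻¹) * star U := by
    apply Matrix.inv_eq_right_inv
    rw [hspec]
    have hUU'' : ∀ X : Matrix (Fin n) (Fin n) ℝ, star U * (U * X) = X := fun X => by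
      rw [← Matrix.mul_assoc, hUU', Matrix.one_mul]
    have hdd : Matrix.diagonal μ * (Matrix.diagonal (fun i => (μ i)⁻¹) * star U) = star U := by
      rw [← Matrix.mul_assoc, Matrix.diagonal_mul_diagonal]
      have : (fun i => μ i * (μ i)⁻¹) = fun _ : Fin n => (1:ℝ) := by
        funext i; exact mul_inv_cancel₀ (hμpos i).ne'
      rw [this, Matrix.diagonal_one, Matrix.one_mul]
    simp only [Matrix.mul_assoc, hUU'', hdd, hUU]
  have hcof : cof M = U * Matrix.diagonal (fun i => M.det * (μ i)⁻¹) * star U := by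
    have hcof1 : cof M = Matrix.adjugate M := by
      rw [cof, Matrix.adjugate_transpose, hsym]
    have hadj : Matrix.adjugate M = M.det • M⁻¹ := by
      rw [Matrix.inv_def, Ring.inverse_eq_inv, smul_smul, mul_inv_cancel₀ hdetpos.ne', one_smul]
    have hdiag : Matrix.diagonal (fun i => M.det * (μ i)⁻¹)
        = M.det • Matrix.diagonal (fun i => (μ i)⁻¹) := by
      rw [← Matrix.diagonal_smul]
      congr 1
    rw [hcof1, hadj, hMinv, hdiag, Matrix.mul_smul, Matrix.smul_mul]
  rw [hcof]
  apply qf_conj_diag U hUmem _ _ _ x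
  · intro i
    have hμinv : C⁻¹ ≤ (μ i)⁻¹ := by
      rw [← one_div, ← one_div]
      exact one_div_le_one_div_of_le (hμpos i) (hhi i)
    calc (C ^ (n + 1))⁻¹ = (C ^ n)⁻¹ * C⁻¹ := by rw [pow_succ, mul_inv]
      _ ≤ M.det * (μ i)⁻¹ := by
          apply mul_le_mul hdlo hμinv (inv_pos.mpr hC0).le hdetpos.le
  · intro i
    have hμinv : (μ i)⁻¹ ≤ C := by
      rw [← one_div]
      calc 1 / μ i ≤ 1 / C⁻¹ := one_div_le_one_div_of_le (inv_pos.mpr hC0) (hlo i)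
        _ = C := by rw [one_div, inv_inv]
    calc M.det * (μ i)⁻¹ ≤ C ^ n * C := by
          apply mul_le_mul hdhi hμinv (inv_pos.mpr (hμpos i)).le (by positivity)
      _ = C ^ (n + 1) := by rw [pow_succ]

end Stmt13Aux

open Stmt13Aux Matrix in
theorem stmt13 (n : ℕ) (hn : 1 ≤ n) (C : ℝ) (hC : 1 ≤ C) :
    ∃ C₁ : ℝ, 1 ≤ C₁ ∧ ∀ A B : Matrix (Fin n) (Fin n) ℝ,
      A.PosDef → B.PosDef → A.IsSymm → B.IsSymm →
      MatLE (C⁻¹ • (1 : Matrix (Fin n) (Fin n) ℝ)) A →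
      MatLE A (C • (1 : Matrix (Fin n) (Fin n) ℝ)) →
      MatLE (C⁻¹ • (1 : Matrix (Fin n) (Fin n) ℝ)) B →
      MatLE B (C • (1 : Matrix (Fin n) (Fin n) ℝ)) →
      (Matrix.of fun i j => ∫ t in (0:ℝ)..1, cof ((1 - t) • B + t • A) i j).IsSymm ∧
      MatLE (C₁⁻¹ • (1 : Matrix (Fin n) (Fin n) ℝ))
        (Matrix.of fun i j => ∫ t in (0:ℝ)..1, cof ((1 - t) • B + t • A) i j) ∧
      MatLE (Matrix.of fun i j => ∫ t in (0:ℝ)..1, cof ((1 - t) • B + t • A) i j)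
        (C₁ • (1 : Matrix (Fin n) (Fin n) ℝ)) := by
  have hC0 : (0:ℝ) < C := lt_of_lt_of_le one_pos hC
  refine ⟨C ^ (n + 1), one_le_pow₀ hC, ?_⟩
  intro A B hApd hBpd hAs hBs hA1 hA2 hB1 hB2
  set C₁ : ℝ := C ^ (n + 1) with hC₁def
  have hC₁1 : (1:ℝ) ≤ C₁ := one_le_pow₀ hC
  -- the path of matrices
  set M : ℝ → Matrix (Fin n) (Fin n) ℝ := fun t => (1 - t) • B + t • A with hMdef
  have hMeq : ∀ t : ℝ, (1 - t) • B + t • A = M t := fun _ => rfl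
  simp only [hMeq]
  set D : Matrix (Fin n) (Fin n) ℝ := Matrix.of fun i j => ∫ t in (0:ℝ)..1, cof (M t) i j
    with hDdef
  -- quadratic form hypotheses
  have qA1 : ∀ x : Fin n → ℝ, C⁻¹ * (x ⬝ᵥ x) ≤ x ⬝ᵥ A *ᵥ x := by
    intro x
    have := qf_psd hA1 x
    rw [qf_sub, qf_smul, qf_one] at this
    linarith
  have qA2 : ∀ x : Fin n → ℝ, x ⬝ᵥ A *ᵥ x ≤ C * (x ⬝ᵥ x) := by
    intro x
    have := qf_psd hA2 x
    rw [qf_sub, qf_smul, qf_one] at this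
    linarith
  have qB1 : ∀ x : Fin n → ℝ, C⁻¹ * (x ⬝ᵥ x) ≤ x ⬝ᵥ B *ᵥ x := by
    intro x
    have := qf_psd hB1 x
    rw [qf_sub, qf_smul, qf_one] at this
    linarith
  have qB2 : ∀ x : Fin n → ℝ, x ⬝ᵥ B *ᵥ x ≤ C * (x ⬝ᵥ x) := by
    intro x
    have := qf_psd hB2 x
    rw [qf_sub, qf_smul, qf_one] at this
    linarith
  -- properties of M t for t ∈ [0,1]
  have hMsymm : ∀ t : ℝ, (M t).IsSymm := by
    intro t
    show (M t)ᵀ = M t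
    rw [hMdef]
    simp only [Matrix.transpose_add, Matrix.transpose_smul]
    rw [show Aᵀ = A from hAs, show Bᵀ = B from hBs]
  have hMqf : ∀ t ∈ Set.Icc (0:ℝ) 1, ∀ x : Fin n → ℝ,
      C⁻¹ * (x ⬝ᵥ x) ≤ x ⬝ᵥ (M t) *ᵥ x ∧ x ⬝ᵥ (M t) *ᵥ x ≤ C * (x ⬝ᵥ x) := by
    intro t ht x
    have hexp : x ⬝ᵥ (M t) *ᵥ x = (1 - t) * (x ⬝ᵥ B *ᵥ x) + t * (x ⬝ᵥ A *ᵥ x) := by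
      rw [hMdef]
      rw [qf_add, qf_smul, qf_smul]
    have h1t : (0:ℝ) ≤ 1 - t := by linarith [ht.2]
    have ht0 : (0:ℝ) ≤ t := ht.1
    constructor
    · rw [hexp]
      have hb := mul_le_mul_of_nonneg_left (qB1 x) h1t
      have ha := mul_le_mul_of_nonneg_left (qA1 x) ht0
      nlinarith
    · rw [hexp]
      have hb := mul_le_mul_of_nonneg_left (qB2 x) h1t
      have ha := mul_le_mul_of_nonneg_left (qA2 x) ht0
      nlinarith
  -- pointwise cof bounds
  have hcofbd : ∀ t ∈ Set.Icc (0:ℝ) 1, ∀ x : Fin n → ℝ,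
      C₁⁻¹ * (x ⬝ᵥ x) ≤ x ⬝ᵥ cof (M t) *ᵥ x ∧ x ⬝ᵥ cof (M t) *ᵥ x ≤ C₁ * (x ⬝ᵥ x) :=
    fun t ht x => cof_qf_bounds hC (M t) (hMsymm t)
      (fun y => (hMqf t ht y).1) (fun y => (hMqf t ht y).2) x
  -- continuity
  have hMcont : Continuous M := by
    rw [hMdef]
    exact ((continuous_const.sub continuous_id).smul continuous_const).add
      (continuous_id.smul continuous_const)
  have hcofcont : Continuous fun t => cof (M t) := by
    have : Continuous fun t => Matrix.adjugate (M t) := hMcont.matrix_adjugate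
    exact this.matrix_transpose
  have hc : ∀ i j, Continuous fun t => cof (M t) i j := fun i j => hcofcont.matrix_elem i j
  have hint : ∀ i j, IntervalIntegrable (fun t => cof (M t) i j) MeasureTheory.volume 0 1 :=
    fun i j => (hc i j).intervalIntegrable 0 1
  -- symmetry of D
  have hDsymm : D.IsSymm := by
    show Dᵀ = D
    funext i j
    show D j i = D i j
    rw [hDdef]
    show (∫ t in (0:ℝ)..1, cof (M t) j i) = ∫ t in (0:ℝ)..1, cof (M t) i j
    apply intervalIntegral.integral_congr
    intro t _
    have h := cof_isSymm (M t) (hMsymm t)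
    have := congrFun (congrFun h j) i
    rw [Matrix.transpose_apply] at this
    exact this.symm
  -- quadratic form of D as an integral
  have hqfD : ∀ x : Fin n → ℝ, x ⬝ᵥ D *ᵥ x = ∫ t in (0:ℝ)..1, x ⬝ᵥ cof (M t) *ᵥ x := by
    intro x
    have expand : ∀ N : Matrix (Fin n) (Fin n) ℝ,
        x ⬝ᵥ N *ᵥ x = ∑ i, ∑ j, x i * (N i j * x j) := by
      intro N
      simp [dotProduct, Matrix.mulVec, Finset.mul_sum]
    rw [expand]
    calc ∑ i, ∑ j, x i * (D i j * x j)
        = ∑ i, ∑ j, ∫ t in (0:ℝ)..1, x i * (cof (M t) i j * x j) := by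
          refine Finset.sum_congr rfl fun i _ => Finset.sum_congr rfl fun j _ => ?_
          rw [intervalIntegral.integral_const_mul, intervalIntegral.integral_mul_const]
          simp [hDdef]
      _ = ∑ i, ∫ t in (0:ℝ)..1, ∑ j, x i * (cof (M t) i j * x j) := by
          refine Finset.sum_congr rfl fun i _ => ?_
          rw [intervalIntegral.integral_finset_sum]
          intro j _
          exact ((hint i j).mul_const _).const_mul _
      _ = ∫ t in (0:ℝ)..1, ∑ i, ∑ j, x i * (cof (M t) i j * x j) := by
          rw [intervalIntegral.integral_finset_sum]
          intro i _
          have : Continuous fun t => ∑ j, x i * (cof (M t) i j * x j) := by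
            apply continuous_finset_sum
            intro j _
            exact continuous_const.mul ((hc i j).mul continuous_const)
          exact this.intervalIntegrable 0 1
      _ = ∫ t in (0:ℝ)..1, x ⬝ᵥ cof (M t) *ᵥ x := by
          refine intervalIntegral.integral_congr fun t _ => ?_
          rw [expand]
  have hgc : ∀ x : Fin n → ℝ, Continuous fun t => x ⬝ᵥ cof (M t) *ᵥ x := by
    intro x
    exact continuous_const.dotProduct (hcofcont.matrix_mulVec continuous_const)
  -- the two bounds
  have hDlo : ∀ x : Fin n → ℝ, C₁⁻¹ * (x ⬝ᵥ x) ≤ x ⬝ᵥ D *ᵥ x := by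
    intro x
    rw [hqfD x]
    have hconst : C₁⁻¹ * (x ⬝ᵥ x) = ∫ _t in (0:ℝ)..1, C₁⁻¹ * (x ⬝ᵥ x) := by simp
    rw [hconst]
    apply intervalIntegral.integral_mono_on zero_le_one intervalIntegrable_const
      ((hgc x).intervalIntegrable 0 1)
    intro t ht
    exact (hcofbd t ht x).1
  have hDhi : ∀ x : Fin n → ℝ, x ⬝ᵥ D *ᵥ x ≤ C₁ * (x ⬝ᵥ x) := by
    intro x
    rw [hqfD x]
    have hconst : C₁ * (x ⬝ᵥ x) = ∫ _t in (0:ℝ)..1, C₁ * (x ⬝ᵥ x) := by simp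
    rw [hconst]
    apply intervalIntegral.integral_mono_on zero_le_one ((hgc x).intervalIntegrable 0 1)
      intervalIntegrable_const
    intro t ht
    exact (hcofbd t ht x).2
  refine ⟨hDsymm, ?_, ?_⟩
  · apply psd_of_qf
    · show (D - C₁⁻¹ • 1)ᵀ = D - C₁⁻¹ • 1
      rw [Matrix.transpose_sub, Matrix.transpose_smul, Matrix.transpose_one,
        show Dᵀ = D from hDsymm]
    · intro x
      rw [qf_sub, qf_smul, qf_one]
      linarith [hDlo x]
  · apply psd_of_qf
    · show (C₁ • 1 - D)ᵀ = C₁ • 1 - D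
      rw [Matrix.transpose_sub, Matrix.transpose_smul, Matrix.transpose_one,
        show Dᵀ = D from hDsymm]
    · intro x
      rw [qf_sub, qf_smul, qf_one]
      linarith [hDhi x]
end
end
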